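/- arXiv:2312.15342 — 5 statements merged into one kernel-verified Lean document; each statement's English description precedes it below -/
import Mathlib

section
/- Let m ≥ 1, Γ̂ a nondegenerate compact interval, and β⁺, β⁻ > 0 constants. For a piecewise polynomial φ = φ⁻ χ_{η<0} + φ⁺ χ_{η≥0} with φ^± ∈ Q^m (tensor-product polynomials of degree ≤ m in η and ξ), satisfying the weak jump conditions ∫_Γ̂ (φ⁺(0,ξ) − φ⁻(0,ξ)) v dξ = 0, ∫_Γ̂ (β⁺ φ_η⁺(0,ξ) − β⁻ φ_η⁻(0,ξ)) v dξ = 0 for all v ∈ P^m(Γ̂), together with the weak jump conditions on ∂^j_η L(φ) for j = 0,…,m−2 (where L is the Laplacian operator in Frenet coordinates), the following holds: given φ⁻ ∈ Q^m there exists a unique φ⁺ ∈ Q^m such that φ satisfies all these conditions. Equivalently, if φ⁻ = 0 then φ⁺ = 0. -/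
open MeasureTheory

noncomputable section

/-- The transformed Laplacian operator in Frenet coordinates. -/
def Lop (J0 J1 J2 : ℝ → ℝ → ℝ) (f : ℝ → ℝ → ℝ) (η ξ : ℝ) : ℝ :=
  iteratedDeriv 2 (fun t => f t ξ) η + J0 η ξ * iteratedDeriv 2 (fun s => f η s) ξ +
    J1 η ξ * deriv (fun t => f t ξ) η + J2 η ξ * deriv (fun s => f η s) ξ

/-- Evaluation of a tensor-product `Q^m` polynomial given by its coefficients. -/
def QEval (m : ℕ) (c : Fin (m + 1) → Fin (m + 1) → ℝ) (η ξ : ℝ) : ℝ :=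
  ∑ i : Fin (m + 1), ∑ j : Fin (m + 1), c i j * η ^ (i : ℕ) * ξ ^ (j : ℕ)

open Polynomial Topology

/-- Key Taylor-type lemma. -/
lemma key_taylor (n : ℕ) (S : Set ℝ) (hS : IsOpen S) (h0 : (0:ℝ) ∈ S)
    (w f : ℝ → ℝ) (hw : ContDiffOn ℝ ⊤ w S) (P : Polynomial ℝ)
    (hf : ∀ t ∈ S, f t = P.eval t + t ^ (n + 1) * w t) :
    iteratedDeriv n f 0 = (n.factorial : ℝ) * P.coeff n := by
  induction n generalizing P w f with
  | zero =>
    simp only [iteratedDeriv_zero]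
    rw [hf 0 h0]
    simp [Polynomial.coeff_zero_eq_eval_zero]
  | succ n ih =>
    rw [iteratedDeriv_succ']
    have hwdiff : DifferentiableOn ℝ w S := hw.differentiableOn (by simp)
    have hderiv : ∀ t ∈ S, deriv f t =
        P.derivative.eval t + t ^ (n + 1) * (((n:ℝ) + 2) * w t + t * deriv w t) := by
      intro t ht
      have hev : f =ᶠ[𝓝 t] fun u => P.eval u + u ^ (n + 2) * w u := by
        filter_upwards [hS.mem_nhds ht] with u hu using hf u hu
      rw [hev.deriv_eq]
      have hwd : DifferentiableAt ℝ w t :=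
        (hwdiff t ht).differentiableAt (hS.mem_nhds ht)
      have h1 : HasDerivAt (fun u : ℝ => P.eval u + u ^ (n + 2) * w u)
          (P.derivative.eval t + (((n:ℝ)+2) * t ^ (n + 1) * w t + t ^ (n + 2) * deriv w t)) t := by
        have := (P.hasDerivAt t).add
          (((hasDerivAt_pow (n+2) t).mul hwd.hasDerivAt))
        refine this.congr_deriv ?_
        rw [show n + 2 - 1 = n + 1 by omega]
        push_cast
        ring
      rw [h1.deriv]
      ring
    have hdw : ContDiffOn ℝ ⊤ (deriv w) S := hw.deriv_of_isOpen hS le_top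
    have := ih (w := fun t => ((n:ℝ) + 2) * w t + t * deriv w t) (f := deriv f)
      ((contDiffOn_const.mul hw).add (contDiffOn_id.mul hdw))
      (P := P.derivative) hderiv
    rw [this, Polynomial.coeff_derivative]
    push_cast [Nat.factorial_succ]
    ring


def rr (m : ℕ) (c : Fin (m + 1) → Fin (m + 1) → ℝ) (i : Fin (m + 1)) (ξ : ℝ) : ℝ :=
  ∑ j : Fin (m + 1), c i j * ξ ^ (j : ℕ)

def qp (m : ℕ) (c : Fin (m + 1) → Fin (m + 1) → ℝ) (ξ : ℝ) : Polynomial ℝ :=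
  ∑ i : Fin (m + 1), C (rr m c i ξ) * X ^ (i : ℕ)

def qx (m : ℕ) (c : Fin (m + 1) → Fin (m + 1) → ℝ) (t : ℝ) : Polynomial ℝ :=
  ∑ j : Fin (m + 1), C (∑ i : Fin (m + 1), c i j * t ^ (i : ℕ)) * X ^ (j : ℕ)

def dp (m : ℕ) (c : Fin (m + 1) → Fin (m + 1) → ℝ) (ξ : ℝ) : Polynomial ℝ :=
  ∑ i : Fin (m + 1), C (∑ j : Fin (m + 1),
    c i j * ((j : ℕ) : ℝ) * ξ ^ ((j : ℕ) - 1)) * X ^ (i : ℕ)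

def bp (m : ℕ) (c : Fin (m + 1) → Fin (m + 1) → ℝ) (ξ : ℝ) : Polynomial ℝ :=
  ∑ i : Fin (m + 1), C (∑ j : Fin (m + 1),
    c i j * ((j : ℕ) : ℝ) * (((j : ℕ) - 1 : ℕ) : ℝ) * ξ ^ ((j : ℕ) - 1 - 1)) * X ^ (i : ℕ)

lemma coeff_finSum (m k : ℕ) (f : Fin (m + 1) → ℝ) :
    (∑ i : Fin (m + 1), C (f i) * X ^ (i : ℕ)).coeff k =
      if h : k < m + 1 then f ⟨k, h⟩ else 0 := by
  rw [Polynomial.finset_sum_coeff]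
  by_cases h : k < m + 1
  · rw [dif_pos h, Finset.sum_eq_single (⟨k, h⟩ : Fin (m + 1))]
    · simp [coeff_C_mul, coeff_X_pow]
    · intro i _ hi
      simp only [coeff_C_mul, coeff_X_pow]
      rw [if_neg, mul_zero]
      exact fun hk => hi (by apply Fin.ext; simp [← hk])
    · simp
  · rw [dif_neg h]
    apply Finset.sum_eq_zero
    intro i _
    simp only [coeff_C_mul, coeff_X_pow]
    rw [if_neg, mul_zero]
    exact fun hk => h (hk ▸ i.isLt)

lemma qeval_eq (m : ℕ) (c : Fin (m + 1) → Fin (m + 1) → ℝ) (t ξ : ℝ) :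
    QEval m c t ξ = (qp m c ξ).eval t := by
  simp only [QEval, qp, rr, Polynomial.eval_finset_sum, eval_mul, eval_C, eval_pow, eval_X]
  refine Finset.sum_congr rfl fun i _ => ?_
  rw [Finset.sum_mul]
  refine Finset.sum_congr rfl fun j _ => by ring

lemma qeval_eq' (m : ℕ) (c : Fin (m + 1) → Fin (m + 1) → ℝ) (t ξ : ℝ) :
    QEval m c t ξ = (qx m c t).eval ξ := by
  simp only [QEval, qx, Polynomial.eval_finset_sum, eval_mul, eval_C, eval_pow, eval_X]
  rw [Finset.sum_comm]
  refine Finset.sum_congr rfl fun j _ => ?_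
  rw [Finset.sum_mul]

lemma deriv_t (m : ℕ) (c : Fin (m + 1) → Fin (m + 1) → ℝ) (t ξ : ℝ) :
    deriv (fun u => QEval m c u ξ) t = (derivative (qp m c ξ)).eval t := by
  have : (fun u => QEval m c u ξ) = fun u => (qp m c ξ).eval u := funext fun u => qeval_eq m c u ξ
  rw [this, Polynomial.deriv]

lemma itd2_t (m : ℕ) (c : Fin (m + 1) → Fin (m + 1) → ℝ) (t ξ : ℝ) :
    iteratedDeriv 2 (fun u => QEval m c u ξ) t =
      (derivative (derivative (qp m c ξ))).eval t := by
  rw [show (2:ℕ) = 1 + 1 from rfl, iteratedDeriv_succ, iteratedDeriv_one]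
  have h1 : deriv (fun u => QEval m c u ξ) = fun u => (derivative (qp m c ξ)).eval u :=
    funext fun u => deriv_t m c u ξ
  rw [h1, Polynomial.deriv]

lemma deriv_s (m : ℕ) (c : Fin (m + 1) → Fin (m + 1) → ℝ) (t ξ : ℝ) :
    deriv (fun s => QEval m c t s) ξ = (dp m c ξ).eval t := by
  have : (fun s => QEval m c t s) = fun s => (qx m c t).eval s := funext fun s => qeval_eq' m c t s
  rw [this, Polynomial.deriv]
  simp only [qx, dp, derivative_sum, derivative_C_mul_X_pow, Polynomial.eval_finset_sum,
    eval_mul, eval_C, eval_pow, eval_X]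
  calc ∑ x : Fin (m+1), (∑ i : Fin (m+1), c i x * t ^ (i:ℕ)) * ((x:ℕ):ℝ) * ξ ^ ((x:ℕ) - 1)
      = ∑ x : Fin (m+1), ∑ i : Fin (m+1),
          c i x * ((x:ℕ):ℝ) * ξ ^ ((x:ℕ) - 1) * t ^ (i:ℕ) := by
        refine Finset.sum_congr rfl fun x _ => ?_
        rw [Finset.sum_mul, Finset.sum_mul]
        exact Finset.sum_congr rfl fun i _ => by ring
    _ = ∑ i : Fin (m+1), ∑ x : Fin (m+1),
          c i x * ((x:ℕ):ℝ) * ξ ^ ((x:ℕ) - 1) * t ^ (i:ℕ) := Finset.sum_comm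
    _ = ∑ i : Fin (m+1), (∑ j : Fin (m+1), c i j * ((j:ℕ):ℝ) * ξ ^ ((j:ℕ) - 1)) * t ^ (i:ℕ) := by
        refine Finset.sum_congr rfl fun i _ => ?_
        rw [Finset.sum_mul]

lemma itd2_s (m : ℕ) (c : Fin (m + 1) → Fin (m + 1) → ℝ) (t ξ : ℝ) :
    iteratedDeriv 2 (fun s => QEval m c t s) ξ = (bp m c ξ).eval t := by
  rw [show (2:ℕ) = 1 + 1 from rfl, iteratedDeriv_succ, iteratedDeriv_one]
  have : (fun s => QEval m c t s) = fun s => (qx m c t).eval s := funext fun s => qeval_eq' m c t s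
  rw [this]
  have h1 : (_root_.deriv fun s => (qx m c t).eval s) = fun s => ((qx m c t).derivative).eval s :=
    funext fun s => Polynomial.deriv (p := qx m c t)
  rw [h1, Polynomial.deriv]
  simp only [qx, bp, derivative_sum, derivative_C_mul_X_pow, Polynomial.eval_finset_sum,
    eval_mul, eval_C, eval_pow, eval_X]
  calc ∑ x : Fin (m+1), (∑ i : Fin (m+1), c i x * t ^ (i:ℕ)) * ((x:ℕ):ℝ) * (((x:ℕ)-1:ℕ):ℝ)
        * ξ ^ ((x:ℕ) - 1 - 1)
      = ∑ x : Fin (m+1), ∑ i : Fin (m+1), c i x * ((x:ℕ):ℝ) * (((x:ℕ)-1:ℕ):ℝ)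
          * ξ ^ ((x:ℕ) - 1 - 1) * t ^ (i:ℕ) := by
        refine Finset.sum_congr rfl fun x _ => ?_
        rw [Finset.sum_mul, Finset.sum_mul, Finset.sum_mul]
        exact Finset.sum_congr rfl fun i _ => by ring
    _ = ∑ i : Fin (m+1), ∑ x : Fin (m+1), c i x * ((x:ℕ):ℝ) * (((x:ℕ)-1:ℕ):ℝ)
          * ξ ^ ((x:ℕ) - 1 - 1) * t ^ (i:ℕ) := Finset.sum_comm
    _ = ∑ i : Fin (m+1), (∑ j : Fin (m+1), c i j * ((j:ℕ):ℝ) * (((j:ℕ)-1:ℕ):ℝ)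
          * ξ ^ ((j:ℕ) - 1 - 1)) * t ^ (i:ℕ) := by
        refine Finset.sum_congr rfl fun i _ => ?_
        rw [Finset.sum_mul]

def TT (K : ℝ) (n : ℕ) : Polynomial ℝ := ∑ k ∈ Finset.range (n + 1), C ((-K) ^ k) * X ^ k

def rho (K : ℝ) (j : ℕ) (t : ℝ) : ℝ := (-K) ^ (j + 1) * (1 + t * K)⁻¹

lemma TT_eval (K : ℝ) (n : ℕ) (t : ℝ) :
    (TT K n).eval t = ∑ k ∈ Finset.range (n + 1), (-(K * t)) ^ k := by
  simp only [TT, Polynomial.eval_finset_sum, eval_mul, eval_C, eval_pow, eval_X]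
  refine Finset.sum_congr rfl fun k _ => ?_
  rw [← mul_pow]
  ring_nf

lemma psi_decomp (K t : ℝ) (h : (1:ℝ) + t * K ≠ 0) (j : ℕ) :
    (1 + t * K)⁻¹ = (TT K j).eval t + t ^ (j + 1) * rho K j t := by
  have hc : (1 + t * K)⁻¹ * (1 + t * K) = 1 := inv_mul_cancel₀ h
  have hx : ((TT K j).eval t) * (1 + t * K) = 1 - (-(K * t)) ^ (j + 1) := by
    have hg := geom_sum_mul (-(K * t)) (j + 1)
    rw [TT_eval]
    linear_combination -hg
  refine (inv_eq_of_mul_eq_one_right ?_)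
  show (1 + t * K) * ((TT K j).eval t + t ^ (j + 1) * rho K j t) = 1
  simp only [rho]
  linear_combination hx + (-K) ^ (j + 1) * t ^ (j + 1) * hc

lemma contDiff_polyeval (p : Polynomial ℝ) : ContDiff ℝ ⊤ fun t : ℝ => p.eval t := by
  induction p using Polynomial.induction_on' with
  | add p q hp hq => simpa [Polynomial.eval_add] using hp.add hq
  | monomial n a =>
    simp only [Polynomial.eval_monomial]
    exact contDiff_const.mul (contDiff_id.pow n)

def LPol (m : ℕ) (c : Fin (m + 1) → Fin (m + 1) → ℝ) (ξ K K' iN2 G : ℝ) (j : ℕ) :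
    Polynomial ℝ :=
  derivative (derivative (qp m c ξ))
    + (C iN2 * (TT K j) ^ 2) * bp m c ξ
    + (C K * TT K j) * derivative (qp m c ξ)
    + (-(C iN2) * (C K' * (X * (TT K j) ^ 3) + C G * (TT K j) ^ 2)) * dp m c ξ

def Wfun (m : ℕ) (c : Fin (m + 1) → Fin (m + 1) → ℝ) (ξ K K' iN2 G : ℝ) (j : ℕ)
    (t : ℝ) : ℝ :=
  (iN2 * rho K j t * (2 * (TT K j).eval t + t ^ (j + 1) * rho K j t)) * (bp m c ξ).eval t
    + (K * rho K j t) * ((derivative (qp m c ξ)).eval t)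
    + (-iN2 * (K' * (t * rho K j t *
        (3 * ((TT K j).eval t) ^ 2 + 3 * ((TT K j).eval t) * (t ^ (j + 1) * rho K j t)
          + (t ^ (j + 1) * rho K j t) ^ 2))
      + G * (rho K j t * (2 * (TT K j).eval t + t ^ (j + 1) * rho K j t)))) * (dp m c ξ).eval t

lemma comp_lemma (m : ℕ) (c : Fin (m + 1) → Fin (m + 1) → ℝ) (ξ : ℝ)
    (K K' iN2 G : ℝ) (J0 J1 J2 : ℝ → ℝ → ℝ)
    (hJ0 : ∀ t, J0 t ξ = ((1 + t * K)⁻¹) ^ 2 * iN2)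
    (hJ1 : ∀ t, J1 t ξ = K * (1 + t * K)⁻¹)
    (hJ2 : ∀ t, J2 t ξ = -(((1 + t * K)⁻¹) ^ 2 * iN2) *
      (t * K' * (1 + t * K)⁻¹ + G))
    (j : ℕ) :
    iteratedDeriv j (fun t => Lop J0 J1 J2 (QEval m c) t ξ) 0 =
      (j.factorial : ℝ) * (LPol m c ξ K K' iN2 G j).coeff j := by
  have hCD : ContDiff ℝ ⊤ fun t : ℝ => 1 + t * K :=
    contDiff_const.add (contDiff_id.mul contDiff_const)
  have hScont : Continuous fun t : ℝ => 1 + t * K := hCD.continuous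
  have hSopen : IsOpen {t : ℝ | 1 + t * K ≠ 0} :=
    hScont.isOpen_preimage {(0:ℝ)}ᶜ isOpen_compl_singleton
  have h0S : (0:ℝ) ∈ {t : ℝ | 1 + t * K ≠ 0} := by simp
  refine key_taylor j _ hSopen h0S (Wfun m c ξ K K' iN2 G j) _ ?_ _ ?_
  · -- smoothness of Wfun on S
    have hinv : ContDiffOn ℝ ⊤ (fun t : ℝ => (1 + t * K)⁻¹) {t : ℝ | 1 + t * K ≠ 0} :=
      hCD.contDiffOn.inv fun t ht => ht
    have hrho : ContDiffOn ℝ ⊤ (rho K j) {t : ℝ | 1 + t * K ≠ 0} := by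
      have : rho K j = fun t => (-K) ^ (j + 1) * (1 + t * K)⁻¹ := rfl
      rw [this]
      exact contDiffOn_const.mul hinv
    have hpe : ∀ p : Polynomial ℝ,
        ContDiffOn ℝ ⊤ (fun t : ℝ => p.eval t) {t : ℝ | 1 + t * K ≠ 0} :=
      fun p => (contDiff_polyeval p).contDiffOn
    have hid : ContDiffOn ℝ (⊤ : WithTop ℕ∞) (fun t : ℝ => t) {t : ℝ | 1 + t * K ≠ 0} :=
      contDiffOn_id
    have hpow : ∀ n : ℕ, ContDiffOn ℝ (⊤ : WithTop ℕ∞) (fun t : ℝ => t ^ n)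
        {t : ℝ | 1 + t * K ≠ 0} := fun n => hid.pow n
    unfold Wfun
    apply ContDiffOn.add
    apply ContDiffOn.add
    · exact ((contDiffOn_const.mul hrho).mul
        (((contDiffOn_const.mul (hpe _)).add ((hpow _).mul hrho)))).mul (hpe _)
    · exact (contDiffOn_const.mul hrho).mul (hpe _)
    · refine ContDiffOn.mul (ContDiffOn.mul contDiffOn_const (ContDiffOn.add ?_ ?_)) (hpe _)
      · refine contDiffOn_const.mul ((hid.mul hrho).mul ?_)
        refine ContDiffOn.add (ContDiffOn.add ?_ ?_) ?_
        · exact contDiffOn_const.mul ((hpe _).pow 2)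
        · exact (contDiffOn_const.mul (hpe _)).mul ((hpow _).mul hrho)
        · exact ((hpow _).mul hrho).pow 2
      · exact contDiffOn_const.mul (hrho.mul ((contDiffOn_const.mul (hpe _)).add
          ((hpow _).mul hrho)))
  · intro t ht
    have hu : (1:ℝ) + t * K ≠ 0 := ht
    have hψ := psi_decomp K t hu j
    simp only [Lop, Wfun, LPol, eval_add, eval_mul, eval_neg, eval_C, eval_pow, eval_X]
    rw [itd2_t, itd2_s, deriv_t, deriv_s, hJ0 t, hJ1 t, hJ2 t, hψ]
    ring

/-! coefficient-continuity machinery -/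

def CC (F : ℝ → Polynomial ℝ) : Prop := ∀ n : ℕ, Continuous fun ξ => (F ξ).coeff n

lemma CC.const (p : Polynomial ℝ) : CC fun _ => p := fun _ => continuous_const

lemma CC.add {F G : ℝ → Polynomial ℝ} (hF : CC F) (hG : CC G) :
    CC fun ξ => F ξ + G ξ := by
  intro n
  simp only [Polynomial.coeff_add]
  exact (hF n).add (hG n)

lemma CC.neg {F : ℝ → Polynomial ℝ} (hF : CC F) : CC fun ξ => -F ξ := by
  intro n
  simp only [Polynomial.coeff_neg]
  exact (hF n).neg

lemma CC.mul {F G : ℝ → Polynomial ℝ} (hF : CC F) (hG : CC G) :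
    CC fun ξ => F ξ * G ξ := by
  intro n
  simp only [Polynomial.coeff_mul]
  exact continuous_finset_sum _ fun p _ => (hF p.1).mul (hG p.2)

lemma CC.pow {F : ℝ → Polynomial ℝ} (hF : CC F) (k : ℕ) : CC fun ξ => (F ξ) ^ k := by
  induction k with
  | zero => simpa using CC.const 1
  | succ k ih =>
    have := ih.mul hF
    simpa [pow_succ] using this

lemma CC.C {f : ℝ → ℝ} (hf : Continuous f) : CC fun ξ => Polynomial.C (f ξ) := by
  intro n
  simp only [Polynomial.coeff_C]
  rcases eq_or_ne n 0 with h | h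
  · simpa [h] using hf
  · simpa [h] using continuous_const

lemma CC.derivative {F : ℝ → Polynomial ℝ} (hF : CC F) :
    CC fun ξ => derivative (F ξ) := by
  intro n
  simp only [Polynomial.coeff_derivative]
  exact (hF (n + 1)).mul continuous_const

lemma CC.sum {ι : Type*} (s : Finset ι) (F : ι → ℝ → Polynomial ℝ)
    (hF : ∀ i ∈ s, CC (F i)) : CC fun ξ => ∑ i ∈ s, F i ξ := by
  intro n
  simp only [Polynomial.finset_sum_coeff]
  exact continuous_finset_sum _ fun i hi => hF i hi n

lemma CC.qp (m : ℕ) (c : Fin (m + 1) → Fin (m + 1) → ℝ) : CC (qp m c) := by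
  apply CC.sum
  intro i _
  exact (CC.C (by unfold rr; continuity : Continuous fun ξ : ℝ => rr m c i ξ)).mul (CC.const _)

lemma CC.bp (m : ℕ) (c : Fin (m + 1) → Fin (m + 1) → ℝ) : CC (bp m c) := by
  apply CC.sum
  intro i _
  refine (CC.C ?_).mul (CC.const _)
  continuity

lemma CC.dp (m : ℕ) (c : Fin (m + 1) → Fin (m + 1) → ℝ) : CC (dp m c) := by
  apply CC.sum
  intro i _
  refine (CC.C ?_).mul (CC.const _)
  continuity

lemma CC.TT {f : ℝ → ℝ} (hf : Continuous f) (j : ℕ) : CC fun ξ => TT (f ξ) j := by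
  apply CC.sum
  intro k _
  exact (CC.C (by continuity : Continuous fun ξ => (-f ξ) ^ k)).mul (CC.const _)

lemma CC.LPol (m : ℕ) (c : Fin (m + 1) → Fin (m + 1) → ℝ)
    {κf K'f iN2f Gf : ℝ → ℝ} (h1 : Continuous κf) (h2 : Continuous K'f)
    (h3 : Continuous iN2f) (h4 : Continuous Gf) (j : ℕ) :
    CC fun ξ => _root_.LPol m c ξ (κf ξ) (K'f ξ) (iN2f ξ) (Gf ξ) j := by
  unfold _root_.LPol
  refine (((((CC.qp m c).derivative.derivative).add
    (((CC.C h3).mul ((CC.TT h1 j).pow 2)).mul (CC.bp m c))).add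
    (((CC.C h1).mul (CC.TT h1 j)).mul ((CC.qp m c).derivative))).add
    ((((CC.C h3).neg).mul (((CC.C h2).mul ((CC.const Polynomial.X).mul
      ((CC.TT h1 j).pow 3))).add ((CC.C h4).mul ((CC.TT h1 j).pow 2)))).mul (CC.dp m c)))

/-! additivity and scaling -/

lemma rr_add (m : ℕ) (c₁ c₂ : Fin (m + 1) → Fin (m + 1) → ℝ) (i : Fin (m + 1)) (ξ : ℝ) :
    rr m (fun i j => c₁ i j + c₂ i j) i ξ = rr m c₁ i ξ + rr m c₂ i ξ := by
  simp [rr, add_mul, Finset.sum_add_distrib]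

lemma rr_smul (m : ℕ) (a : ℝ) (c : Fin (m + 1) → Fin (m + 1) → ℝ) (i : Fin (m + 1)) (ξ : ℝ) :
    rr m (fun i j => a * c i j) i ξ = a * rr m c i ξ := by
  simp [rr, Finset.mul_sum, mul_assoc]

lemma qp_add (m : ℕ) (c₁ c₂ : Fin (m + 1) → Fin (m + 1) → ℝ) (ξ : ℝ) :
    qp m (fun i j => c₁ i j + c₂ i j) ξ = qp m c₁ ξ + qp m c₂ ξ := by
  simp [qp, rr_add, add_mul, Finset.sum_add_distrib]

lemma qp_smul (m : ℕ) (a : ℝ) (c : Fin (m + 1) → Fin (m + 1) → ℝ) (ξ : ℝ) :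
    qp m (fun i j => a * c i j) ξ = C a * qp m c ξ := by
  simp [qp, rr_smul, Finset.mul_sum, mul_assoc]

lemma bp_add (m : ℕ) (c₁ c₂ : Fin (m + 1) → Fin (m + 1) → ℝ) (ξ : ℝ) :
    bp m (fun i j => c₁ i j + c₂ i j) ξ = bp m c₁ ξ + bp m c₂ ξ := by
  simp [bp, add_mul, Finset.sum_add_distrib]

lemma bp_smul (m : ℕ) (a : ℝ) (c : Fin (m + 1) → Fin (m + 1) → ℝ) (ξ : ℝ) :
    bp m (fun i j => a * c i j) ξ = C a * bp m c ξ := by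
  simp only [bp, Finset.mul_sum, map_mul, mul_assoc, map_sum]
  refine Finset.sum_congr rfl fun i _ => ?_
  rw [← Finset.mul_sum, mul_assoc]

lemma dp_add (m : ℕ) (c₁ c₂ : Fin (m + 1) → Fin (m + 1) → ℝ) (ξ : ℝ) :
    dp m (fun i j => c₁ i j + c₂ i j) ξ = dp m c₁ ξ + dp m c₂ ξ := by
  simp [dp, add_mul, Finset.sum_add_distrib]

lemma dp_smul (m : ℕ) (a : ℝ) (c : Fin (m + 1) → Fin (m + 1) → ℝ) (ξ : ℝ) :
    dp m (fun i j => a * c i j) ξ = C a * dp m c ξ := by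
  simp only [dp, Finset.mul_sum, map_mul, mul_assoc, map_sum]
  refine Finset.sum_congr rfl fun i _ => ?_
  rw [← Finset.mul_sum, mul_assoc]

lemma LPol_add (m : ℕ) (c₁ c₂ : Fin (m + 1) → Fin (m + 1) → ℝ) (ξ K K' iN2 G : ℝ) (j : ℕ) :
    LPol m (fun i j => c₁ i j + c₂ i j) ξ K K' iN2 G j =
      LPol m c₁ ξ K K' iN2 G j + LPol m c₂ ξ K K' iN2 G j := by
  simp only [LPol, qp_add, bp_add, dp_add, derivative_add]
  ring

lemma LPol_smul (m : ℕ) (a : ℝ) (c : Fin (m + 1) → Fin (m + 1) → ℝ) (ξ K K' iN2 G : ℝ) (j : ℕ) :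
    LPol m (fun i j => a * c i j) ξ K K' iN2 G j = C a * LPol m c ξ K K' iN2 G j := by
  simp only [LPol, qp_smul, bp_smul, dp_smul, derivative_C_mul]
  ring

/-! triangularity -/

lemma LPol_coeff_tri (m : ℕ) (c : Fin (m + 1) → Fin (m + 1) → ℝ) (ξ K K' iN2 G : ℝ) (j : ℕ)
    (hj : j + 2 < m + 1)
    (hz : ∀ i : Fin (m + 1), (i : ℕ) ≤ j + 1 → ∀ l, c i l = 0) :
    (LPol m c ξ K K' iN2 G j).coeff j =
      (((j:ℝ) + 2) * ((j:ℝ) + 1)) * rr m c ⟨j + 2, hj⟩ ξ := by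
  have hq : ∀ y : ℕ, y ≤ j + 1 → (qp m c ξ).coeff y = 0 := by
    intro y hy
    rw [qp, coeff_finSum]
    split
    · next h =>
      simp [rr, hz ⟨y, h⟩ hy]
    · rfl
  have hb : ∀ y : ℕ, y ≤ j + 1 → (bp m c ξ).coeff y = 0 := by
    intro y hy
    rw [bp, coeff_finSum]
    split
    · next h => simp [hz ⟨y, h⟩ hy]
    · rfl
  have hd : ∀ y : ℕ, y ≤ j + 1 → (dp m c ξ).coeff y = 0 := by
    intro y hy
    rw [dp, coeff_finSum]
    split
    · next h => simp [hz ⟨y, h⟩ hy]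
    · rfl
  have hdq : ∀ y : ℕ, y ≤ j → (derivative (qp m c ξ)).coeff y = 0 := by
    intro y hy
    rw [Polynomial.coeff_derivative, hq (y + 1) (by omega), zero_mul]
  have hmul0 : ∀ (P Q : Polynomial ℝ), (∀ y : ℕ, y ≤ j → Q.coeff y = 0) →
      (P * Q).coeff j = 0 := by
    intro P Q hQ
    rw [Polynomial.coeff_mul]
    apply Finset.sum_eq_zero
    intro p hp
    rw [Finset.HasAntidiagonal.mem_antidiagonal] at hp
    rw [hQ p.2 (by omega), mul_zero]
  rw [LPol]
  simp only [Polynomial.coeff_add]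
  rw [hmul0 _ _ (fun y hy => hb y (by omega)), hmul0 _ _ (fun y hy => hdq y hy),
    hmul0 _ _ (fun y hy => hd y (by omega))]
  rw [Polynomial.coeff_derivative, Polynomial.coeff_derivative]
  rw [qp, coeff_finSum]
  rw [dif_pos hj]
  push_cast
  ring

/-! orthogonality implies vanishing -/

lemma orth_zero (m : ℕ) (a b : ℝ) (hab : a < b) (d : Fin (m + 1) → ℝ)
    (h : ∀ k : Fin (m + 1),
      (∫ ξ in a..b, (∑ j : Fin (m + 1), d j * ξ ^ (j : ℕ)) * ξ ^ (k : ℕ)) = 0) :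
    ∀ j, d j = 0 := by
  set p : ℝ → ℝ := fun ξ => ∑ j : Fin (m + 1), d j * ξ ^ (j : ℕ) with hp
  have hpc : Continuous p := by
    apply continuous_finset_sum
    intro j _
    exact continuous_const.mul (continuous_pow _)
  have hint : ∀ k : ℕ, IntervalIntegrable (fun ξ => p ξ * ξ ^ k) volume a b :=
    fun k => (hpc.mul (continuous_pow k)).intervalIntegrable a b
  have hsq : (∫ ξ in a..b, p ξ * p ξ) = 0 := by
    have h1 : (fun ξ => p ξ * p ξ) =
        fun ξ => ∑ k : Fin (m + 1), d k * (p ξ * ξ ^ (k : ℕ)) := by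
      funext ξ
      calc p ξ * p ξ = ∑ k : Fin (m + 1), p ξ * (d k * ξ ^ (k : ℕ)) := by
            rw [← Finset.mul_sum]
        _ = ∑ k : Fin (m + 1), d k * (p ξ * ξ ^ (k : ℕ)) := by
            exact Finset.sum_congr rfl fun k _ => by ring
    rw [h1, intervalIntegral.integral_finset_sum]
    · have : ∀ k : Fin (m + 1), (∫ ξ in a..b, d k * (p ξ * ξ ^ (k : ℕ))) = 0 := by
        intro k
        rw [intervalIntegral.integral_const_mul, h k, mul_zero]
      simp [this]
    · intro k _
      exact (hint (k : ℕ)).const_mul _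
  have hzero : ∀ x ∈ Set.Icc a b, p x = 0 := by
    intro x hx
    by_contra hne
    have hpos : 0 < ∫ ξ in a..b, p ξ * p ξ := by
      apply intervalIntegral.integral_pos hab
      · exact (hpc.mul hpc).continuousOn
      · exact fun y _ => mul_self_nonneg _
      · exact ⟨x, hx, mul_self_pos.mpr hne⟩
    rw [hsq] at hpos
    exact lt_irrefl _ hpos
  intro j
  set P : Polynomial ℝ := ∑ i : Fin (m + 1), C (d i) * X ^ (i : ℕ) with hP
  have hPe : ∀ x, P.eval x = p x := by
    intro x
    simp [hP, Polynomial.eval_finset_sum, p]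
  have hProot : P = 0 := by
    apply Polynomial.eq_zero_of_infinite_isRoot
    apply Set.Infinite.mono (s := Set.Icc a b)
    · intro x hx
      simp only [Set.mem_setOf_eq, Polynomial.IsRoot]
      rw [hPe x, hzero x hx]
    · exact Set.infinite_coe_iff.mp (Set.Icc.infinite hab)
  have := coeff_finSum m (j : ℕ) d
  rw [← hP, hProot] at this
  simp only [Polynomial.coeff_zero] at this
  rw [dif_pos j.isLt] at this
  simpa using this.symm

/-! the explicit integrands and the linear map -/

def Erow (m : ℕ) (κf K'f iN2f Gf : ℝ → ℝ) (c : Fin (m + 1) → Fin (m + 1) → ℝ)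
    (n : ℕ) (ξ : ℝ) : ℝ :=
  if h : n < m + 1 ∧ n ≤ 1 then rr m c ⟨n, h.1⟩ ξ
  else ((n - 2).factorial : ℝ) *
    (LPol m c ξ (κf ξ) (K'f ξ) (iN2f ξ) (Gf ξ) (n - 2)).coeff (n - 2)

lemma Erow_le_one (m : ℕ) (κf K'f iN2f Gf : ℝ → ℝ) (c : Fin (m + 1) → Fin (m + 1) → ℝ)
    (n : ℕ) (h1 : n < m + 1) (h2 : n ≤ 1) (ξ : ℝ) :
    Erow m κf K'f iN2f Gf c n ξ = rr m c ⟨n, h1⟩ ξ := by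
  rw [Erow, dif_pos ⟨h1, h2⟩]

lemma Erow_ge_two (m : ℕ) (κf K'f iN2f Gf : ℝ → ℝ) (c : Fin (m + 1) → Fin (m + 1) → ℝ)
    (n : ℕ) (h2 : 2 ≤ n) (ξ : ℝ) :
    Erow m κf K'f iN2f Gf c n ξ = ((n - 2).factorial : ℝ) *
      (LPol m c ξ (κf ξ) (K'f ξ) (iN2f ξ) (Gf ξ) (n - 2)).coeff (n - 2) := by
  rw [Erow, dif_neg (by omega)]

lemma Erow_add (m : ℕ) (κf K'f iN2f Gf : ℝ → ℝ) (c₁ c₂ : Fin (m + 1) → Fin (m + 1) → ℝ)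
    (n : ℕ) (ξ : ℝ) :
    Erow m κf K'f iN2f Gf (fun i j => c₁ i j + c₂ i j) n ξ =
      Erow m κf K'f iN2f Gf c₁ n ξ + Erow m κf K'f iN2f Gf c₂ n ξ := by
  unfold Erow
  split
  · rw [rr_add]
  · rw [LPol_add, Polynomial.coeff_add, mul_add]

lemma Erow_smul (m : ℕ) (κf K'f iN2f Gf : ℝ → ℝ) (a : ℝ) (c : Fin (m + 1) → Fin (m + 1) → ℝ)
    (n : ℕ) (ξ : ℝ) :
    Erow m κf K'f iN2f Gf (fun i j => a * c i j) n ξ =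
      a * Erow m κf K'f iN2f Gf c n ξ := by
  unfold Erow
  split
  · rw [rr_smul]
  · rw [LPol_smul, Polynomial.coeff_C_mul]
    ring

lemma Erow_cont (m : ℕ) {κf K'f iN2f Gf : ℝ → ℝ} (h1 : Continuous κf) (h2 : Continuous K'f)
    (h3 : Continuous iN2f) (h4 : Continuous Gf) (c : Fin (m + 1) → Fin (m + 1) → ℝ)
    (n : ℕ) : Continuous (Erow m κf K'f iN2f Gf c n) := by
  unfold Erow
  split
  · unfold rr; continuity
  · exact continuous_const.mul (CC.LPol m c h1 h2 h3 h4 (n - 2) (n - 2))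

lemma Erow_intble (m : ℕ) {κf K'f iN2f Gf : ℝ → ℝ} (h1 : Continuous κf) (h2 : Continuous K'f)
    (h3 : Continuous iN2f) (h4 : Continuous Gf) (c : Fin (m + 1) → Fin (m + 1) → ℝ)
    (n k : ℕ) (a b : ℝ) :
    IntervalIntegrable (fun ξ => Erow m κf K'f iN2f Gf c n ξ * ξ ^ k) volume a b :=
  ((Erow_cont m h1 h2 h3 h4 c n).mul (continuous_pow k)).intervalIntegrable a b

def Phim (m : ℕ) (a b : ℝ) (κf K'f iN2f Gf : ℝ → ℝ) (h1 : Continuous κf)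
    (h2 : Continuous K'f) (h3 : Continuous iN2f) (h4 : Continuous Gf) :
    (Fin (m + 1) → Fin (m + 1) → ℝ) →ₗ[ℝ] (Fin (m + 1) → Fin (m + 1) → ℝ) where
  toFun c := fun i k => ∫ ξ in a..b, Erow m κf K'f iN2f Gf c (i : ℕ) ξ * ξ ^ (k : ℕ)
  map_add' c₁ c₂ := by
    funext i k
    have hc : (c₁ + c₂) = fun i j => c₁ i j + c₂ i j := rfl
    simp only [hc, Pi.add_apply]
    rw [← intervalIntegral.integral_add (Erow_intble m h1 h2 h3 h4 c₁ _ _ a b)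
      (Erow_intble m h1 h2 h3 h4 c₂ _ _ a b)]
    congr 1
    funext ξ
    rw [Erow_add]
    ring
  map_smul' t c := by
    funext i k
    have hc : (t • c) = fun i j => t * c i j := rfl
    simp only [hc, RingHom.id_apply, Pi.smul_apply, smul_eq_mul]
    rw [← intervalIntegral.integral_const_mul]
    congr 1
    funext ξ
    rw [Erow_smul]
    ring

lemma Phim_inj (m : ℕ) (a b : ℝ) (hab : a < b) (κf K'f iN2f Gf : ℝ → ℝ) (h1 : Continuous κf)
    (h2 : Continuous K'f) (h3 : Continuous iN2f) (h4 : Continuous Gf) :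
    Function.Injective (Phim m a b κf K'f iN2f Gf h1 h2 h3 h4) := by
  rw [← LinearMap.ker_eq_bot]
  rw [LinearMap.ker_eq_bot']
  intro c hc
  have hint : ∀ n : ℕ, n < m + 1 → ∀ k : Fin (m + 1),
      (∫ ξ in a..b, Erow m κf K'f iN2f Gf c n ξ * ξ ^ (k : ℕ)) = 0 := by
    intro n hn k
    have := congrFun (congrFun hc ⟨n, hn⟩) k
    exact this
  have H : ∀ n : ℕ, ∀ hn : n < m + 1, ∀ l, c ⟨n, hn⟩ l = 0 := by
    intro n
    induction n using Nat.strong_induction_on with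
    | _ n IH =>
      intro hn l
      rcases le_or_gt n 1 with h1' | h2'
      · -- rows 0 and 1
        have hrow : ∀ k : Fin (m + 1),
            (∫ ξ in a..b, rr m c ⟨n, hn⟩ ξ * ξ ^ (k : ℕ)) = 0 := by
          intro k
          have := hint n hn k
          simpa [Erow_le_one m κf K'f iN2f Gf c n hn h1'] using this
        exact orth_zero m a b hab (c ⟨n, hn⟩) (fun k => hrow k) l
      · -- rows ≥ 2
        obtain ⟨j, rfl⟩ : ∃ j, n = j + 2 := ⟨n - 2, by omega⟩
        have hz : ∀ i : Fin (m + 1), (i : ℕ) ≤ j + 1 → ∀ l', c i l' = 0 := by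
          intro i hi l'
          have : c ⟨(i : ℕ), i.isLt⟩ l' = 0 := IH (i : ℕ) (by omega) i.isLt l'
          simpa using this
        have hrow : ∀ k : Fin (m + 1),
            (∫ ξ in a..b, rr m c ⟨j + 2, hn⟩ ξ * ξ ^ (k : ℕ)) = 0 := by
          intro k
          have h0 := hint (j + 2) hn k
          rw [show (∫ ξ in a..b, Erow m κf K'f iN2f Gf c (j + 2) ξ * ξ ^ (k : ℕ)) =
              ∫ ξ in a..b, ((j.factorial : ℝ) * (((j:ℝ) + 2) * ((j:ℝ) + 1))) *
                (rr m c ⟨j + 2, hn⟩ ξ * ξ ^ (k : ℕ)) from ?_] at h0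
          · rw [intervalIntegral.integral_const_mul] at h0
            have hfac : ((j.factorial : ℝ) * (((j:ℝ) + 2) * ((j:ℝ) + 1))) ≠ 0 := by
              positivity
            exact (mul_eq_zero.mp h0).resolve_left hfac
          · congr 1
            funext ξ
            rw [Erow_ge_two m κf K'f iN2f Gf c (j + 2) (by omega)]
            simp only [Nat.add_sub_cancel]
            rw [LPol_coeff_tri m c ξ (κf ξ) (K'f ξ) (iN2f ξ) (Gf ξ) j hn hz]
            ring
        exact orth_zero m a b hab (c ⟨j + 2, hn⟩) (fun k => hrow k) l
  funext i l
  have := H (i : ℕ) i.isLt l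
  simpa using this

lemma int_vanish (a b : ℝ) (m : ℕ) (D : ℝ → ℝ) (hD : Continuous D)
    (h : ∀ k : ℕ, k < m + 1 → (∫ ξ in a..b, D ξ * ξ ^ k) = 0) :
    ∀ v : Polynomial ℝ, v.natDegree ≤ m → (∫ ξ in a..b, D ξ * v.eval ξ) = 0 := by
  intro v hv
  have hev : ∀ ξ : ℝ, v.eval ξ = ∑ k ∈ Finset.range (m + 1), v.coeff k * ξ ^ k := by
    intro ξ
    exact Polynomial.eval_eq_sum_range' (by omega) ξ
  have h1 : (fun ξ => D ξ * v.eval ξ) =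
      fun ξ => ∑ k ∈ Finset.range (m + 1), v.coeff k * (D ξ * ξ ^ k) := by
    funext ξ
    rw [hev ξ, Finset.mul_sum]
    exact Finset.sum_congr rfl fun k _ => by ring
  rw [h1, intervalIntegral.integral_finset_sum]
  · refine Finset.sum_eq_zero fun k hk => ?_
    rw [intervalIntegral.integral_const_mul, h k (Finset.mem_range.mp hk), mul_zero]
  · intro k _
    exact ((hD.mul (continuous_pow k)).intervalIntegrable a b).const_mul _


/-- Existence and uniqueness of an IFE extension: given `φ⁻ ∈ Q^m` there is a unique
`φ⁺ ∈ Q^m` such that the piecewise polynomial satisfies the weak jump conditions,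
including the weak jump conditions on `∂^j_η L(φ)` for `j = 0,…,m-2`. -/
theorem ife_extension_exists_unique
    (m : ℕ) (hm : 1 ≤ m) (a b : ℝ) (hab : a < b)
    (βp βm : ℝ) (hβp : 0 < βp) (hβm : 0 < βm)
    (g : ℝ → EuclideanSpace ℝ (Fin 2)) (hg : ContDiff ℝ 3 g)
    (hreg : ∀ ξ : ℝ, deriv g ξ ≠ 0)
    (κ : ℝ → ℝ)
    (hκ : ∀ ξ, κ ξ =
      (deriv g ξ 0 * deriv (deriv g) ξ 1 - deriv g ξ 1 * deriv (deriv g) ξ 0) /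
        ‖deriv g ξ‖ ^ 3)
    (ψ J0 J1 J2 : ℝ → ℝ → ℝ)
    (hψ : ∀ η ξ, ψ η ξ = (1 + η * κ ξ)⁻¹)
    (hJ0 : ∀ η ξ, J0 η ξ = (ψ η ξ / ‖deriv g ξ‖) ^ 2)
    (hJ1 : ∀ η ξ, J1 η ξ = κ ξ * ψ η ξ)
    (hJ2 : ∀ η ξ, J2 η ξ = -(ψ η ξ / ‖deriv g ξ‖) ^ 2 *
      (η * deriv κ ξ * ψ η ξ +
        (deriv g ξ 0 * deriv (deriv g) ξ 0 + deriv g ξ 1 * deriv (deriv g) ξ 1) /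
          ‖deriv g ξ‖ ^ 2)) :
    ∀ cm : Fin (m + 1) → Fin (m + 1) → ℝ,
      ∃! cp : Fin (m + 1) → Fin (m + 1) → ℝ,
        (∀ v : Polynomial ℝ, v.natDegree ≤ m →
          ∫ ξ in a..b, (QEval m cp 0 ξ - QEval m cm 0 ξ) * v.eval ξ = 0) ∧
        (∀ v : Polynomial ℝ, v.natDegree ≤ m →
          ∫ ξ in a..b,
            (βp * deriv (fun t => QEval m cp t ξ) 0 -
              βm * deriv (fun t => QEval m cm t ξ) 0) * v.eval ξ = 0) ∧
        (∀ j : ℕ, j + 2 ≤ m → ∀ v : Polynomial ℝ, v.natDegree ≤ m →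
          ∫ ξ in a..b,
            (βp * iteratedDeriv j (fun t => Lop J0 J1 J2 (QEval m cp) t ξ) 0 -
              βm * iteratedDeriv j (fun t => Lop J0 J1 J2 (QEval m cm) t ξ) 0) *
              v.eval ξ = 0) := by
  -- continuity of the geometric data
  have hg3 : ContDiff ℝ ((1 + 2 : ℕ) : WithTop ℕ∞) g := by exact_mod_cast hg
  have hg3' : ContDiff ℝ ((2 + 1 : ℕ) : WithTop ℕ∞) g := by exact_mod_cast hg
  have hdg : ContDiff ℝ ((2:ℕ) : WithTop ℕ∞) (deriv g) := by
    have := ContDiff.iterate_deriv' 2 1 hg3'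
    simpa using this
  have hddg : ContDiff ℝ ((1:ℕ) : WithTop ℕ∞) (deriv (deriv g)) := by
    have := ContDiff.iterate_deriv' 1 2 hg3
    simpa [Function.iterate_succ, Function.comp] using this
  have hd : ∀ i : Fin 2, ContDiff ℝ ((2:ℕ) : WithTop ℕ∞) (fun ξ => deriv g ξ i) :=
    fun i => by exact (EuclideanSpace.proj i).contDiff.comp hdg
  have he : ∀ i : Fin 2, ContDiff ℝ ((1:ℕ) : WithTop ℕ∞) (fun ξ => deriv (deriv g) ξ i) :=
    fun i => by exact (EuclideanSpace.proj i).contDiff.comp hddg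
  have h21 : ((1:ℕ) : WithTop ℕ∞) ≤ ((2:ℕ) : WithTop ℕ∞) := by exact_mod_cast Nat.le_succ 1
  have hd1 : ∀ i : Fin 2, ContDiff ℝ ((1:ℕ) : WithTop ℕ∞) (fun ξ => deriv g ξ i) :=
    fun i => (hd i).of_le h21
  have hne : ∀ ξ, ‖deriv g ξ‖ ≠ 0 := fun ξ => norm_ne_zero_iff.mpr (hreg ξ)
  have hnrm : ∀ ξ : ℝ, ‖deriv g ξ‖ = Real.sqrt (deriv g ξ 0 ^ 2 + deriv g ξ 1 ^ 2) := by
    intro ξ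
    rw [EuclideanSpace.norm_eq]
    simp [Fin.sum_univ_two, Real.norm_eq_abs, sq_abs]
  have hpos : ∀ ξ : ℝ, 0 < deriv g ξ 0 ^ 2 + deriv g ξ 1 ^ 2 := by
    intro ξ
    have h1 : 0 < ‖deriv g ξ‖ := norm_pos_iff.mpr (hreg ξ)
    rw [hnrm ξ] at h1
    exact Real.sqrt_pos.mp h1
  have hnsq : ContDiff ℝ ((1:ℕ) : WithTop ℕ∞) (fun ξ => deriv g ξ 0 ^ 2 + deriv g ξ 1 ^ 2) :=
    ((hd1 0).pow 2).add ((hd1 1).pow 2)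
  have hden : ContDiff ℝ ((1:ℕ) : WithTop ℕ∞) (fun ξ => ‖deriv g ξ‖ ^ 3) := by
    have heq : (fun ξ => ‖deriv g ξ‖ ^ 3) =
        fun ξ => Real.sqrt (deriv g ξ 0 ^ 2 + deriv g ξ 1 ^ 2) ^ 3 := by
      funext ξ; rw [hnrm ξ]
    rw [heq, contDiff_iff_contDiffAt]
    intro ξ
    exact ((hnsq.contDiffAt).sqrt (ne_of_gt (hpos ξ))).pow 3
  have hκ1 : ContDiff ℝ ((1:ℕ) : WithTop ℕ∞) κ := by
    have heq : κ = fun ξ =>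
        (deriv g ξ 0 * deriv (deriv g) ξ 1 - deriv g ξ 1 * deriv (deriv g) ξ 0) /
          ‖deriv g ξ‖ ^ 3 := funext hκ
    rw [heq]
    exact ContDiff.div (((hd1 0).mul (he 1)).sub ((hd1 1).mul (he 0))) hden
      fun ξ => pow_ne_zero 3 (hne ξ)
  have hκc : Continuous κ := hκ1.continuous
  have hκ'c : Continuous (deriv κ) := hκ1.continuous_deriv (by exact_mod_cast le_refl 1)
  set κ' : ℝ → ℝ := deriv κ with hκ'def
  set iN2f : ℝ → ℝ := fun ξ => (‖deriv g ξ‖ ^ 2)⁻¹ with hiN2def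
  set Gf : ℝ → ℝ := fun ξ => (deriv g ξ 0 * deriv (deriv g) ξ 0 +
    deriv g ξ 1 * deriv (deriv g) ξ 1) * iN2f ξ with hGdef
  have hiN2c : Continuous iN2f :=
    (hdg.continuous.norm.pow 2).inv₀ fun ξ => pow_ne_zero 2 (hne ξ)
  have hGc : Continuous Gf := by
    apply Continuous.mul ?_ hiN2c
    exact ((hd1 0).continuous.mul (he 0).continuous).add
      ((hd1 1).continuous.mul (he 1).continuous)
  intro cm
  -- J coefficient identities
  have hJ0' : ∀ ξ t, J0 t ξ = ((1 + t * κ ξ)⁻¹) ^ 2 * iN2f ξ := by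
    intro ξ t
    rw [hJ0, hψ, hiN2def, div_pow, div_eq_mul_inv]
  have hJ1' : ∀ ξ t, J1 t ξ = κ ξ * (1 + t * κ ξ)⁻¹ := fun ξ t => by rw [hJ1, hψ]
  have hJ2' : ∀ ξ t, J2 t ξ = -(((1 + t * κ ξ)⁻¹) ^ 2 * iN2f ξ) *
      (t * κ' ξ * (1 + t * κ ξ)⁻¹ + Gf ξ) := by
    intro ξ t
    rw [hJ2, hψ, hGdef, hκ'def, hiN2def]
    simp only [div_pow, div_eq_mul_inv]
    ring
  -- row identities
  have hE0 : ∀ (c : Fin (m+1) → Fin (m+1) → ℝ) (ξ : ℝ),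
      QEval m c 0 ξ = Erow m κ κ' iN2f Gf c 0 ξ := by
    intro c ξ
    rw [Erow_le_one m κ κ' iN2f Gf c 0 (by omega) (by omega)]
    rw [qeval_eq, ← Polynomial.coeff_zero_eq_eval_zero, qp, coeff_finSum, dif_pos]
  have hE1 : ∀ (c : Fin (m+1) → Fin (m+1) → ℝ) (ξ : ℝ),
      deriv (fun t => QEval m c t ξ) 0 = Erow m κ κ' iN2f Gf c 1 ξ := by
    intro c ξ
    rw [deriv_t, ← Polynomial.coeff_zero_eq_eval_zero, Polynomial.coeff_derivative]
    rw [qp, coeff_finSum, dif_pos (by omega : 0 + 1 < m + 1)]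
    rw [Erow_le_one m κ κ' iN2f Gf c 1 (by omega) (by omega)]
    push_cast
    ring
  have hE2 : ∀ (c : Fin (m+1) → Fin (m+1) → ℝ) (ξ : ℝ) (j : ℕ),
      iteratedDeriv j (fun t => Lop J0 J1 J2 (QEval m c) t ξ) 0 =
        Erow m κ κ' iN2f Gf c (j + 2) ξ := by
    intro c ξ j
    rw [Erow_ge_two m κ κ' iN2f Gf c (j + 2) (by omega)]
    simp only [Nat.add_sub_cancel]
    exact comp_lemma m c ξ (κ ξ) (κ' ξ) (iN2f ξ) (Gf ξ) J0 J1 J2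
      (hJ0' ξ) (hJ1' ξ) (hJ2' ξ) j
  set Φ := Phim m a b κ κ' iN2f Gf hκc hκ'c hiN2c hGc with hΦdef
  have hPhiApply : ∀ c (i k : Fin (m + 1)), Φ c i k =
      ∫ ξ in a..b, Erow m κ κ' iN2f Gf c (i : ℕ) ξ * ξ ^ (k : ℕ) := fun c i k => rfl
  have hib : ∀ c (n k : ℕ), IntervalIntegrable
      (fun ξ => Erow m κ κ' iN2f Gf c n ξ * ξ ^ k) volume a b :=
    fun c n k => Erow_intble m hκc hκ'c hiN2c hGc c n k a b
  have hinj : Function.Injective Φ := Phim_inj m a b hab κ κ' iN2f Gf hκc hκ'c hiN2c hGc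
  set y : Fin (m + 1) → Fin (m + 1) → ℝ := fun i k =>
    (if (i : ℕ) = 0 then 1 else βm / βp) *
      ∫ ξ in a..b, Erow m κ κ' iN2f Gf cm (i : ℕ) ξ * ξ ^ (k : ℕ) with hydef
  obtain ⟨cp₀, hcp₀⟩ := (LinearMap.injective_iff_surjective.mp hinj) y
  -- forward direction: conditions imply Φ cp = y
  have hforward : ∀ cp : Fin (m + 1) → Fin (m + 1) → ℝ,
      ((∀ v : Polynomial ℝ, v.natDegree ≤ m →
          ∫ ξ in a..b, (QEval m cp 0 ξ - QEval m cm 0 ξ) * v.eval ξ = 0) ∧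
        (∀ v : Polynomial ℝ, v.natDegree ≤ m →
          ∫ ξ in a..b,
            (βp * deriv (fun t => QEval m cp t ξ) 0 -
              βm * deriv (fun t => QEval m cm t ξ) 0) * v.eval ξ = 0) ∧
        (∀ j : ℕ, j + 2 ≤ m → ∀ v : Polynomial ℝ, v.natDegree ≤ m →
          ∫ ξ in a..b,
            (βp * iteratedDeriv j (fun t => Lop J0 J1 J2 (QEval m cp) t ξ) 0 -
              βm * iteratedDeriv j (fun t => Lop J0 J1 J2 (QEval m cm) t ξ) 0) *
              v.eval ξ = 0)) → Φ cp = y := by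
    rintro cp ⟨h1, h2, h3⟩
    funext i k
    have hkdeg : (X ^ (k : ℕ) : Polynomial ℝ).natDegree ≤ m := by
      simpa [Polynomial.natDegree_X_pow] using Nat.lt_succ_iff.mp k.isLt
    rcases i with ⟨n, hn⟩
    rw [hPhiApply, hydef]
    simp only []
    rcases Nat.lt_or_ge n 2 with hn2 | hn2
    · interval_cases n
      · -- row 0
        have hv := h1 (X ^ (k : ℕ)) hkdeg
        simp only [Polynomial.eval_pow, Polynomial.eval_X] at hv
        have heq : (fun ξ => (QEval m cp 0 ξ - QEval m cm 0 ξ) * ξ ^ (k : ℕ)) =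
            fun ξ => Erow m κ κ' iN2f Gf cp 0 ξ * ξ ^ (k : ℕ) -
              Erow m κ κ' iN2f Gf cm 0 ξ * ξ ^ (k : ℕ) := by
          funext ξ; rw [hE0, hE0]; ring
        rw [heq, intervalIntegral.integral_sub (hib cp 0 (k : ℕ)) (hib cm 0 (k : ℕ))] at hv
        have hfin : (∫ ξ in a..b, Erow m κ κ' iN2f Gf cp 0 ξ * ξ ^ (k : ℕ)) =
            ∫ ξ in a..b, Erow m κ κ' iN2f Gf cm 0 ξ * ξ ^ (k : ℕ) := by linarith [hv]
        simpa using hfin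
      · -- row 1
        have hv := h2 (X ^ (k : ℕ)) hkdeg
        simp only [Polynomial.eval_pow, Polynomial.eval_X] at hv
        have heq : (fun ξ => (βp * deriv (fun t => QEval m cp t ξ) 0 -
              βm * deriv (fun t => QEval m cm t ξ) 0) * ξ ^ (k : ℕ)) =
            fun ξ => βp * (Erow m κ κ' iN2f Gf cp 1 ξ * ξ ^ (k : ℕ)) -
              βm * (Erow m κ κ' iN2f Gf cm 1 ξ * ξ ^ (k : ℕ)) := by
          funext ξ; rw [hE1, hE1]; ring
        rw [heq, intervalIntegral.integral_sub ((hib cp 1 (k : ℕ)).const_mul βp)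
          ((hib cm 1 (k : ℕ)).const_mul βm), intervalIntegral.integral_const_mul,
          intervalIntegral.integral_const_mul] at hv
        have hfin : (∫ ξ in a..b, Erow m κ κ' iN2f Gf cp 1 ξ * ξ ^ (k : ℕ)) =
            βm / βp * ∫ ξ in a..b, Erow m κ κ' iN2f Gf cm 1 ξ * ξ ^ (k : ℕ) := by
          rw [div_mul_eq_mul_div, eq_div_iff hβp.ne']
          linarith [hv]
        simpa using hfin
    · -- rows ≥ 2
      obtain ⟨j, rfl⟩ : ∃ j, n = j + 2 := ⟨n - 2, by omega⟩
      have hv := h3 j (by omega) (X ^ (k : ℕ)) hkdeg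
      simp only [Polynomial.eval_pow, Polynomial.eval_X] at hv
      have heq : (fun ξ => (βp * iteratedDeriv j (fun t => Lop J0 J1 J2 (QEval m cp) t ξ) 0 -
            βm * iteratedDeriv j (fun t => Lop J0 J1 J2 (QEval m cm) t ξ) 0) * ξ ^ (k : ℕ)) =
          fun ξ => βp * (Erow m κ κ' iN2f Gf cp (j + 2) ξ * ξ ^ (k : ℕ)) -
            βm * (Erow m κ κ' iN2f Gf cm (j + 2) ξ * ξ ^ (k : ℕ)) := by
        funext ξ; rw [hE2, hE2]; ring
      rw [heq, intervalIntegral.integral_sub ((hib cp (j + 2) (k : ℕ)).const_mul βp)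
        ((hib cm (j + 2) (k : ℕ)).const_mul βm), intervalIntegral.integral_const_mul,
        intervalIntegral.integral_const_mul] at hv
      have hfin : (∫ ξ in a..b, Erow m κ κ' iN2f Gf cp (j + 2) ξ * ξ ^ (k : ℕ)) =
          βm / βp * ∫ ξ in a..b, Erow m κ κ' iN2f Gf cm (j + 2) ξ * ξ ^ (k : ℕ) := by
        rw [div_mul_eq_mul_div, eq_div_iff hβp.ne']
        linarith [hv]
      simpa using hfin
  -- backward direction: Φ cp = y implies the conditions
  have hbackward : ∀ cp : Fin (m + 1) → Fin (m + 1) → ℝ, Φ cp = y →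
      ((∀ v : Polynomial ℝ, v.natDegree ≤ m →
          ∫ ξ in a..b, (QEval m cp 0 ξ - QEval m cm 0 ξ) * v.eval ξ = 0) ∧
        (∀ v : Polynomial ℝ, v.natDegree ≤ m →
          ∫ ξ in a..b,
            (βp * deriv (fun t => QEval m cp t ξ) 0 -
              βm * deriv (fun t => QEval m cm t ξ) 0) * v.eval ξ = 0) ∧
        (∀ j : ℕ, j + 2 ≤ m → ∀ v : Polynomial ℝ, v.natDegree ≤ m →
          ∫ ξ in a..b,
            (βp * iteratedDeriv j (fun t => Lop J0 J1 J2 (QEval m cp) t ξ) 0 -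
              βm * iteratedDeriv j (fun t => Lop J0 J1 J2 (QEval m cm) t ξ) 0) *
              v.eval ξ = 0)) := by
    intro cp hΦy
    have hentry : ∀ (n : ℕ) (hn : n < m + 1) (k : ℕ) (hk : k < m + 1),
        (∫ ξ in a..b, Erow m κ κ' iN2f Gf cp n ξ * ξ ^ k) =
          (if n = 0 then 1 else βm / βp) *
            ∫ ξ in a..b, Erow m κ κ' iN2f Gf cm n ξ * ξ ^ k := by
      intro n hn k hk
      have := congrFun (congrFun hΦy ⟨n, hn⟩) ⟨k, hk⟩
      rw [hPhiApply, hydef] at this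
      simpa using this
    have hEc : ∀ c n, Continuous (Erow m κ κ' iN2f Gf c n) :=
      fun c n => Erow_cont m hκc hκ'c hiN2c hGc c n
    refine ⟨?_, ?_, ?_⟩
    · intro v hv
      have heq : (fun ξ => QEval m cp 0 ξ - QEval m cm 0 ξ) =
          fun ξ => Erow m κ κ' iN2f Gf cp 0 ξ - Erow m κ κ' iN2f Gf cm 0 ξ := by
        funext ξ; rw [hE0, hE0]
      rw [show (fun ξ => (QEval m cp 0 ξ - QEval m cm 0 ξ) * v.eval ξ) =
          fun ξ => (Erow m κ κ' iN2f Gf cp 0 ξ - Erow m κ κ' iN2f Gf cm 0 ξ) * v.eval ξ by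
        funext ξ; rw [hE0, hE0]]
      apply int_vanish a b m _ (((hEc cp 0).sub (hEc cm 0))) _ v hv
      intro k hk
      have h0 := hentry 0 (by omega) k hk
      rw [if_pos rfl, one_mul] at h0
      simp only [Pi.sub_apply, Pi.mul_apply]
      rw [show (fun ξ => (Erow m κ κ' iN2f Gf cp 0 ξ - Erow m κ κ' iN2f Gf cm 0 ξ) * ξ ^ k) =
          fun ξ => Erow m κ κ' iN2f Gf cp 0 ξ * ξ ^ k -
            Erow m κ κ' iN2f Gf cm 0 ξ * ξ ^ k by funext ξ; ring]
      rw [intervalIntegral.integral_sub (hib cp 0 k) (hib cm 0 k), h0, sub_self]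
    · intro v hv
      rw [show (fun ξ => (βp * deriv (fun t => QEval m cp t ξ) 0 -
            βm * deriv (fun t => QEval m cm t ξ) 0) * v.eval ξ) =
          fun ξ => (βp * Erow m κ κ' iN2f Gf cp 1 ξ -
            βm * Erow m κ κ' iN2f Gf cm 1 ξ) * v.eval ξ by
        funext ξ; rw [hE1, hE1]]
      apply int_vanish a b m _ ((continuous_const.mul (hEc cp 1)).sub
        (continuous_const.mul (hEc cm 1))) _ v hv
      intro k hk
      have h0 := hentry 1 (by omega) k hk
      rw [if_neg (by omega)] at h0
      simp only [Pi.sub_apply, Pi.mul_apply]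
      rw [show (fun ξ => (βp * Erow m κ κ' iN2f Gf cp 1 ξ -
            βm * Erow m κ κ' iN2f Gf cm 1 ξ) * ξ ^ k) =
          fun ξ => βp * (Erow m κ κ' iN2f Gf cp 1 ξ * ξ ^ k) -
            βm * (Erow m κ κ' iN2f Gf cm 1 ξ * ξ ^ k) by funext ξ; ring]
      rw [intervalIntegral.integral_sub ((hib cp 1 k).const_mul βp)
        ((hib cm 1 k).const_mul βm), intervalIntegral.integral_const_mul,
        intervalIntegral.integral_const_mul, h0]
      field_simp
      ring
    · intro j hj v hv
      rw [show (fun ξ => (βp * iteratedDeriv j (fun t => Lop J0 J1 J2 (QEval m cp) t ξ) 0 -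
            βm * iteratedDeriv j (fun t => Lop J0 J1 J2 (QEval m cm) t ξ) 0) * v.eval ξ) =
          fun ξ => (βp * Erow m κ κ' iN2f Gf cp (j + 2) ξ -
            βm * Erow m κ κ' iN2f Gf cm (j + 2) ξ) * v.eval ξ by
        funext ξ; rw [hE2, hE2]]
      apply int_vanish a b m _ ((continuous_const.mul (hEc cp (j + 2))).sub
        (continuous_const.mul (hEc cm (j + 2)))) _ v hv
      intro k hk
      have h0 := hentry (j + 2) (by omega) k hk
      rw [if_neg (by omega)] at h0
      simp only [Pi.sub_apply, Pi.mul_apply]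
      rw [show (fun ξ => (βp * Erow m κ κ' iN2f Gf cp (j + 2) ξ -
            βm * Erow m κ κ' iN2f Gf cm (j + 2) ξ) * ξ ^ k) =
          fun ξ => βp * (Erow m κ κ' iN2f Gf cp (j + 2) ξ * ξ ^ k) -
            βm * (Erow m κ κ' iN2f Gf cm (j + 2) ξ * ξ ^ k) by funext ξ; ring]
      rw [intervalIntegral.integral_sub ((hib cp (j + 2) k).const_mul βp)
        ((hib cm (j + 2) k).const_mul βm), intervalIntegral.integral_const_mul,
        intervalIntegral.integral_const_mul, h0]
      field_simp
      ring
  refine ⟨cp₀, hbackward cp₀ hcp₀, ?_⟩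
  intro cp' hcp'
  apply hinj
  rw [hcp₀]
  exact hforward cp' hcp'
end
end

section
/- With the Frenet coordinates (η,ξ) on a tubular neighborhood of a regular C² curve g with unit normal n and curvature κ, the divergence of the normal vector field x ↦ n(ξ(x)) equals κ(ξ)(1+ηκ(ξ))⁻¹, and the divergence of the tangent vector field x ↦ τ(ξ(x)) equals 0. -/
noncomputable section

/-- The divergence of a planar vector field. -/
def div2 (F : EuclideanSpace ℝ (Fin 2) → EuclideanSpace ℝ (Fin 2))
    (x : EuclideanSpace ℝ (Fin 2)) : ℝ :=
  ∑ i : Fin 2, fderiv ℝ F x (EuclideanSpace.single i 1) i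

/-- Divergence of the normal and tangent fields in Frenet coordinates:
`∇·n(ξ(x)) = κ(ξ)(1+ηκ(ξ))⁻¹` and `∇·τ(ξ(x)) = 0`. -/
theorem div_normal_tangent
    (g : ℝ → EuclideanSpace ℝ (Fin 2))
    (hg : ContDiff ℝ 2 g)
    (hreg : ∀ ξ : ℝ, deriv g ξ ≠ 0)
    (τ n : ℝ → EuclideanSpace ℝ (Fin 2)) (κ : ℝ → ℝ)
    (hτ : ∀ ξ, τ ξ = ‖deriv g ξ‖⁻¹ • deriv g ξ)
    (hn : ∀ ξ, n ξ = ![τ ξ 1, -(τ ξ 0)])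
    (hκ : ∀ ξ, κ ξ =
      (deriv g ξ 0 * deriv (deriv g) ξ 1 - deriv g ξ 1 * deriv (deriv g) ξ 0) /
        ‖deriv g ξ‖ ^ 3)
    (ηc ξc : EuclideanSpace ℝ (Fin 2) → ℝ)
    (x : EuclideanSpace ℝ (Fin 2))
    (hdη : DifferentiableAt ℝ ηc x) (hdξ : DifferentiableAt ℝ ξc x)
    (hgradη : gradient ηc x = n (ξc x))
    (hgradξ : gradient ξc x =
      (‖deriv g (ξc x)‖⁻¹ * (1 + ηc x * κ (ξc x))⁻¹) • τ (ξc x))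
    (hne : 1 + ηc x * κ (ξc x) ≠ 0) :
    div2 (fun y => n (ξc y)) x = κ (ξc x) * (1 + ηc x * κ (ξc x))⁻¹ ∧
    div2 (fun y => τ (ξc y)) x = 0 := by
  classical
  set ξ₀ := ξc x with hξ0
  -- smoothness
  have h2 : ContDiff ℝ ((1:WithTop ℕ∞) + 1) g := by
    convert hg using 2
    norm_num
  obtain ⟨hgdiff, -, hgd1⟩ := contDiff_succ_iff_deriv.mp h2
  have hder2 : Differentiable ℝ (deriv g) := hgd1.differentiable one_ne_zero
  have hd2 : HasDerivAt (deriv g) (deriv (deriv g) ξ₀) ξ₀ := (hder2 ξ₀).hasDerivAt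
  -- abbreviations
  set a : ℝ := deriv g ξ₀ 0 with ha_def
  set b : ℝ := deriv g ξ₀ 1 with hb_def
  set a' : ℝ := deriv (deriv g) ξ₀ 0 with ha'_def
  set b' : ℝ := deriv (deriv g) ξ₀ 1 with hb'_def
  set s : ℝ := ‖deriv g ξ₀‖ with hs_def
  have sne : s ≠ 0 := by
    simpa [hs_def] using norm_ne_zero_iff.mpr (hreg ξ₀)
  have ha : HasDerivAt (fun t => deriv g t 0) a' ξ₀ := by
    exact
      ((EuclideanSpace.proj (0 : Fin 2)).hasFDerivAt).comp_hasDerivAt ξ₀ hd2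
  have hb : HasDerivAt (fun t => deriv g t 1) b' ξ₀ := by
    exact
      ((EuclideanSpace.proj (1 : Fin 2)).hasFDerivAt).comp_hasDerivAt ξ₀ hd2
  have hnorm : ∀ t : ℝ, ‖deriv g t‖ = Real.sqrt ((deriv g t 0)^2 + (deriv g t 1)^2) := by
    intro t
    rw [EuclideanSpace.norm_eq]
    simp [Fin.sum_univ_two, sq_abs, Real.norm_eq_abs]
  have hs2 : s ^ 2 = a ^ 2 + b ^ 2 := by
    rw [hs_def, hnorm, Real.sq_sqrt (by positivity)]
  have hune : a ^ 2 + b ^ 2 ≠ 0 := by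
    rw [← hs2]; exact pow_ne_zero 2 sne
  -- derivative of the norm
  have hu : HasDerivAt (fun t => (deriv g t 0)^2 + (deriv g t 1)^2)
      (2*a*a' + 2*b*b') ξ₀ := by
    have := ((ha.pow 2).add (hb.pow 2))
    refine this.congr_deriv ?_
    push_cast; ring
  have hsder : HasDerivAt (fun t => ‖deriv g t‖) ((a*a' + b*b')/s) ξ₀ := by
    have h := (Real.hasDerivAt_sqrt hune).comp ξ₀ hu
    have heq : (fun t : ℝ => ‖deriv g t‖)
        = fun t => Real.sqrt ((deriv g t 0)^2 + (deriv g t 1)^2) := funext hnorm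
    rw [heq]
    simp only [Function.comp_def] at h
    refine h.congr_deriv ?_
    rw [← hnorm, ← hs_def]
    field_simp
  -- τ components
  have hτcomp : ∀ (t : ℝ) (i : Fin 2), τ t i = ‖deriv g t‖⁻¹ * deriv g t i := by
    intro t i
    rw [hτ t]
    simp
  have hτ0fun : (fun t => τ t 0) = fun t => ‖deriv g t‖⁻¹ * deriv g t 0 :=
    funext fun t => hτcomp t 0
  have hτ1fun : (fun t => τ t 1) = fun t => ‖deriv g t‖⁻¹ * deriv g t 1 :=
    funext fun t => hτcomp t 1
  set dτ0 : ℝ := -((a*a' + b*b')/s) / s^2 * a + s⁻¹ * a' with hdτ0_def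
  set dτ1 : ℝ := -((a*a' + b*b')/s) / s^2 * b + s⁻¹ * b' with hdτ1_def
  have hτ0 : HasDerivAt (fun t => τ t 0) dτ0 ξ₀ := by
    rw [hτ0fun]
    exact (hsder.inv sne).mul ha
  have hτ1 : HasDerivAt (fun t => τ t 1) dτ1 ξ₀ := by
    rw [hτ1fun]
    exact (hsder.inv sne).mul hb
  -- key Frenet identities
  have hκξ : κ ξ₀ = (a * b' - b * a') / s ^ 3 := hκ ξ₀
  have k0 : dτ0 = -(κ ξ₀ * s) * (s⁻¹ * b) := by
    rw [hκξ, hdτ0_def]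
    field_simp
    linear_combination a' * hs2
  have k1 : dτ1 = (κ ξ₀ * s) * (s⁻¹ * a) := by
    rw [hκξ, hdτ1_def]
    field_simp
    linear_combination b' * hs2
  -- vector derivatives of n and τ
  have hnfun : n = fun t => (τ t 1) • (EuclideanSpace.single (0:Fin 2) (1:ℝ))
      + (-(τ t 0)) • (EuclideanSpace.single (1:Fin 2) (1:ℝ)) := by
    funext t
    ext i
    rw [hn t]
    fin_cases i <;>
      simp [EuclideanSpace.single_apply, PiLp.add_apply, PiLp.smul_apply]
  have hτfun : τ = fun t => (τ t 0) • (EuclideanSpace.single (0:Fin 2) (1:ℝ))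
      + (τ t 1) • (EuclideanSpace.single (1:Fin 2) (1:ℝ)) := by
    funext t
    ext i
    fin_cases i <;>
      simp [EuclideanSpace.single_apply, PiLp.add_apply, PiLp.smul_apply]
  have hvn : HasDerivAt n (dτ1 • (EuclideanSpace.single (0:Fin 2) (1:ℝ))
      + (-dτ0) • (EuclideanSpace.single (1:Fin 2) (1:ℝ))) ξ₀ := by
    rw [hnfun]
    exact (hτ1.smul_const _).add ((hτ0.neg).smul_const _)
  have hvτ : HasDerivAt τ (dτ0 • (EuclideanSpace.single (0:Fin 2) (1:ℝ))
      + dτ1 • (EuclideanSpace.single (1:Fin 2) (1:ℝ))) ξ₀ := by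
    nth_rewrite 1 [hτfun]
    exact (hτ0.smul_const _).add (hτ1.smul_const _)
  -- the fderiv of ξc and its values on basis vectors
  have hLf : HasFDerivAt ξc (fderiv ℝ ξc x) x := hdξ.hasFDerivAt
  have hLval : ∀ i : Fin 2,
      fderiv ℝ ξc x (EuclideanSpace.single i 1)
        = (s⁻¹ * (1 + ηc x * κ ξ₀)⁻¹) * τ ξ₀ i := by
    intro i
    have hg' := hdξ.hasGradientAt.hasFDerivAt
    rw [hg'.fderiv, InnerProductSpace.toDual_apply_apply, EuclideanSpace.inner_single_right,
      hgradξ]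
    simp
  constructor
  · -- divergence of the normal field
    have hFn : HasFDerivAt (fun y => n (ξc y))
        (((1 : ℝ →L[ℝ] ℝ).smulRight (dτ1 • (EuclideanSpace.single (0:Fin 2) (1:ℝ))
          + (-dτ0) • (EuclideanSpace.single (1:Fin 2) (1:ℝ)))).comp (fderiv ℝ ξc x)) x := by
      have := (hasDerivAt_iff_hasFDerivAt.mp hvn).comp x hLf
      exact this
    rw [div2, hFn.fderiv, Fin.sum_univ_two]
    simp only [ContinuousLinearMap.coe_comp', Function.comp_apply,
      ContinuousLinearMap.smulRight_apply, ContinuousLinearMap.one_apply,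
      PiLp.add_apply, PiLp.smul_apply, smul_eq_mul, EuclideanSpace.single_apply]
    rw [hLval 0, hLval 1, k0, k1, hτcomp ξ₀ 0, hτcomp ξ₀ 1, ← hs_def, ← ha_def, ← hb_def]
    norm_num
    field_simp
    linear_combination (-κ ξ₀) * hs2
  · -- divergence of the tangent field
    have hFτ : HasFDerivAt (fun y => τ (ξc y))
        (((1 : ℝ →L[ℝ] ℝ).smulRight (dτ0 • (EuclideanSpace.single (0:Fin 2) (1:ℝ))
          + dτ1 • (EuclideanSpace.single (1:Fin 2) (1:ℝ)))).comp (fderiv ℝ ξc x)) x := by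
      have := (hasDerivAt_iff_hasFDerivAt.mp hvτ).comp x hLf
      exact this
    rw [div2, hFτ.fderiv, Fin.sum_univ_two]
    simp only [ContinuousLinearMap.coe_comp', Function.comp_apply,
      ContinuousLinearMap.smulRight_apply, ContinuousLinearMap.one_apply,
      PiLp.add_apply, PiLp.smul_apply, smul_eq_mul, EuclideanSpace.single_apply]
    rw [hLval 0, hLval 1, k0, k1, hτcomp ξ₀ 0, hτcomp ξ₀ 1, ← hs_def, ← ha_def, ← hb_def]
    norm_num
    ring
end
end

section
/- Let u be C² on a tubular neighborhood of a regular C³ curve g and û = u ∘ P with P(η,ξ) = g(ξ)+ηn(ξ). Then the Laplacian satisfies Δu(x) = û_ηη + J₀ û_ξξ + J₁ û_η + J₂ û_ξ evaluated at (η,ξ) = P⁻¹(x), where J₀ = (ψ/‖g'‖)², J₁ = κψ, J₂ = −(ψ/‖g'‖)²(ηκ'ψ + g'·g''/‖g'‖²) and ψ = (1+ηκ)⁻¹. -/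
noncomputable section

/-- The Laplacian of a planar scalar field. -/
def lap2 (u : EuclideanSpace ℝ (Fin 2) → ℝ) (x : EuclideanSpace ℝ (Fin 2)) : ℝ :=
  ∑ i : Fin 2,
    fderiv ℝ (fun y => fderiv ℝ u y (EuclideanSpace.single i 1)) x
      (EuclideanSpace.single i 1)

section Aux

abbrev E2 := EuclideanSpace ℝ (Fin 2)

lemma euclid_expand' (v : E2) :
    v = v 0 • EuclideanSpace.single (0:Fin 2) (1:ℝ) + v 1 • EuclideanSpace.single (1:Fin 2) (1:ℝ) := by
  ext i; fin_cases i <;> simp [EuclideanSpace.single_apply]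

lemma hasDerivAt_euclid {f : ℝ → E2} {v : E2} {s : ℝ}
    (h0 : HasDerivAt (fun t => f t 0) (v 0) s)
    (h1 : HasDerivAt (fun t => f t 1) (v 1) s) : HasDerivAt f v s := by
  set e := EuclideanSpace.equiv (Fin 2) ℝ with he
  have hc : HasDerivAt (fun t => e (f t)) (e v) s := by
    refine hasDerivAt_pi.2 fun i => ?_
    fin_cases i
    · exact h0
    · exact h1
  have := (e.symm.toContinuousLinearMap.hasFDerivAt (x := e (f s))).comp_hasDerivAt s hc
  simpa [Function.comp_def, e] using this

lemma lin_expand (D : E2 →L[ℝ] ℝ) (v : E2) :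
    D v = v 0 * D (EuclideanSpace.single 0 1) + v 1 * D (EuclideanSpace.single 1 1) := by
  conv_lhs => rw [euclid_expand' v]
  simp

lemma bilin_expand (B : E2 →L[ℝ] E2 →L[ℝ] ℝ) (v w : E2) :
    B v w = v 0 * w 0 * B (EuclideanSpace.single 0 1) (EuclideanSpace.single 0 1)
      + v 0 * w 1 * B (EuclideanSpace.single 0 1) (EuclideanSpace.single 1 1)
      + v 1 * w 0 * B (EuclideanSpace.single 1 1) (EuclideanSpace.single 0 1)
      + v 1 * w 1 * B (EuclideanSpace.single 1 1) (EuclideanSpace.single 1 1) := by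
  conv_lhs => rw [euclid_expand' v, euclid_expand' w]
  simp [mul_add, mul_assoc]
  ring

lemma iteratedDeriv_two (f : ℝ → ℝ) : iteratedDeriv 2 f = deriv (deriv f) := by
  have h : (2:ℕ) = 1 + 1 := rfl
  rw [h, iteratedDeriv_succ, iteratedDeriv_one]

end Aux

set_option maxHeartbeats 2000000 in
/-- The Laplacian in Frenet coordinates:
`Δu(x) = û_ηη + J₀ û_ξξ + J₁ û_η + J₂ û_ξ` at `(η,ξ) = P⁻¹(x)`. -/
theorem laplacian_in_frenet_coordinates
    (g : ℝ → EuclideanSpace ℝ (Fin 2))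
    (hg : ContDiff ℝ 3 g)
    (hreg : ∀ ξ : ℝ, deriv g ξ ≠ 0)
    (τ n : ℝ → EuclideanSpace ℝ (Fin 2)) (κ : ℝ → ℝ)
    (hτ : ∀ ξ, τ ξ = ‖deriv g ξ‖⁻¹ • deriv g ξ)
    (hn : ∀ ξ, n ξ = ![τ ξ 1, -(τ ξ 0)])
    (hκ : ∀ ξ, κ ξ =
      (deriv g ξ 0 * deriv (deriv g) ξ 1 - deriv g ξ 1 * deriv (deriv g) ξ 0) /
        ‖deriv g ξ‖ ^ 3)
    (ψ J0 J1 J2 : ℝ → ℝ → ℝ)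
    (hψ : ∀ η ξ, ψ η ξ = (1 + η * κ ξ)⁻¹)
    (hJ0 : ∀ η ξ, J0 η ξ = (ψ η ξ / ‖deriv g ξ‖) ^ 2)
    (hJ1 : ∀ η ξ, J1 η ξ = κ ξ * ψ η ξ)
    (hJ2 : ∀ η ξ, J2 η ξ = -(ψ η ξ / ‖deriv g ξ‖) ^ 2 *
      (η * deriv κ ξ * ψ η ξ +
        (deriv g ξ 0 * deriv (deriv g) ξ 0 + deriv g ξ 1 * deriv (deriv g) ξ 1) /
          ‖deriv g ξ‖ ^ 2))
    (N : Set (EuclideanSpace ℝ (Fin 2))) (hN : IsOpen N)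
    (u : EuclideanSpace ℝ (Fin 2) → ℝ) (hu : ContDiffOn ℝ 2 u N)
    (η ξ : ℝ) (hx : g ξ + η • n ξ ∈ N) (hne : 1 + η * κ ξ ≠ 0) :
    lap2 u (g ξ + η • n ξ)
      = iteratedDeriv 2 (fun t => u (g ξ + t • n ξ)) η +
        J0 η ξ * iteratedDeriv 2 (fun s => u (g s + η • n s)) ξ +
        J1 η ξ * deriv (fun t => u (g ξ + t • n ξ)) η +
        J2 η ξ * deriv (fun s => u (g s + η • n s)) ξ := by
  -- basic smoothness of g
  have hg' : ContDiff ℝ 2 (deriv g) := by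
    have := (contDiff_succ_iff_deriv (n := 2)).1 (by exact_mod_cast hg)
    exact this.2.2
  have hgd : ∀ t, HasDerivAt g (deriv g t) t :=
    fun t => (hg.differentiable (by norm_num) t).hasDerivAt
  have hgd2 : ∀ t, HasDerivAt (deriv g) (deriv (deriv g) t) t :=
    fun t => (hg'.differentiable (by norm_num) t).hasDerivAt
  have hd : ∀ (i : Fin 2) (t : ℝ), HasDerivAt (fun t => deriv g t i) (deriv (deriv g) t i) t :=
    fun i t => ((EuclideanSpace.proj i).hasFDerivAt.comp_hasDerivAt t (hgd2 t) :)
  have hpos : ∀ s : ℝ, 0 < ‖deriv g s‖ := fun s => norm_pos_iff.2 (hreg s)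
  have hL2 : ∀ s : ℝ, ‖deriv g s‖ ^ 2 = deriv g s 0 ^ 2 + deriv g s 1 ^ 2 := by
    intro s
    rw [EuclideanSpace.norm_eq, Real.sq_sqrt (by positivity)]
    simp [Fin.sum_univ_two, sq_abs]
  -- derivative of the norm of g'
  have hLd : ∀ s : ℝ, HasDerivAt (fun t => ‖deriv g t‖)
      ((deriv g s 0 * deriv (deriv g) s 0 + deriv g s 1 * deriv (deriv g) s 1) / ‖deriv g s‖) s := by
    intro s
    have hnorm : (fun t => ‖deriv g t‖) = fun t => Real.sqrt (deriv g t 0 ^ 2 + deriv g t 1 ^ 2) := by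
      funext t
      rw [EuclideanSpace.norm_eq]
      simp [Fin.sum_univ_two, sq_abs]
    have hw : HasDerivAt (fun t => deriv g t 0 ^ 2 + deriv g t 1 ^ 2)
        (2 * deriv g s 0 * deriv (deriv g) s 0 + 2 * deriv g s 1 * deriv (deriv g) s 1) s := by
      refine (((hd 0 s).pow 2).add ((hd 1 s).pow 2)).congr_deriv (Eq.symm ?_)
      ring
    have hx2 : deriv g s 0 ^ 2 + deriv g s 1 ^ 2 ≠ 0 := by
      rw [← hL2 s]; exact pow_ne_zero 2 (norm_ne_zero_iff.2 (hreg s))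
    have := (Real.hasDerivAt_sqrt hx2).comp s hw
    rw [hnorm]
    refine this.congr_deriv (Eq.symm ?_)
    have hs : Real.sqrt (deriv g s 0 ^ 2 + deriv g s 1 ^ 2) = ‖deriv g s‖ :=
      (congrFun hnorm s).symm
    rw [hs]
    field_simp
  -- coordinates of n
  have hn0 : ∀ s : ℝ, n s 0 = ‖deriv g s‖⁻¹ * deriv g s 1 := by
    intro s
    have := congrArg (fun v : Fin 2 → ℝ => v 0) (hn s)
    simpa [hτ] using this
  have hn1 : ∀ s : ℝ, n s 1 = -(‖deriv g s‖⁻¹ * deriv g s 0) := by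
    intro s
    have := congrArg (fun v : Fin 2 → ℝ => v 1) (hn s)
    simpa [hτ] using this
  -- the Frenet derivative of n
  have hnd : ∀ s : ℝ, HasDerivAt n (κ s • deriv g s) s := by
    intro s
    have hinv : HasDerivAt (fun t => (‖deriv g t‖)⁻¹)
        (-((deriv g s 0 * deriv (deriv g) s 0 + deriv g s 1 * deriv (deriv g) s 1) / ‖deriv g s‖)
          / ‖deriv g s‖ ^ 2) s := (hLd s).inv (hpos s).ne'
    refine hasDerivAt_euclid ?_ ?_
    · have h := hinv.mul (hd 1 s)
      have heq : (fun t => n t 0) = fun t => (‖deriv g t‖)⁻¹ * deriv g t 1 := funext hn0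
      rw [heq]
      refine h.congr_deriv (Eq.symm ?_)
      have : (κ s • deriv g s) 0 = κ s * deriv g s 0 := by simp
      rw [this, hκ s]
      have hLne := (hpos s).ne'
      have expand : -((deriv g s 0 * deriv (deriv g) s 0 + deriv g s 1 * deriv (deriv g) s 1) / ‖deriv g s‖)
            / ‖deriv g s‖ ^ 2 * deriv g s 1 + ‖deriv g s‖⁻¹ * deriv (deriv g) s 1
          = (deriv (deriv g) s 1 * ‖deriv g s‖ ^ 2
              - deriv g s 1 * (deriv g s 0 * deriv (deriv g) s 0 + deriv g s 1 * deriv (deriv g) s 1))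
            / ‖deriv g s‖ ^ 3 := by
        field_simp
        ring
      rw [expand, hL2 s]
      field_simp
      ring
    · have h := (hinv.mul (hd 0 s)).neg
      have heq : (fun t => n t 1) = fun t => -((‖deriv g t‖)⁻¹ * deriv g t 0) := funext hn1
      rw [heq]
      refine h.congr_deriv (Eq.symm ?_)
      have : (κ s • deriv g s) 1 = κ s * deriv g s 1 := by simp
      rw [this, hκ s]
      have hLne := (hpos s).ne'
      have expand : -(-((deriv g s 0 * deriv (deriv g) s 0 + deriv g s 1 * deriv (deriv g) s 1) / ‖deriv g s‖)
            / ‖deriv g s‖ ^ 2 * deriv g s 0 + ‖deriv g s‖⁻¹ * deriv (deriv g) s 0)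
          = (deriv g s 0 * (deriv g s 0 * deriv (deriv g) s 0 + deriv g s 1 * deriv (deriv g) s 1)
              - deriv (deriv g) s 0 * ‖deriv g s‖ ^ 2)
            / ‖deriv g s‖ ^ 3 := by
        field_simp
        ring
      rw [expand, hL2 s]
      field_simp
      ring

  -- derivative of the curve s ↦ g s + η • n s
  have hγd : ∀ s : ℝ, HasDerivAt (fun t => g t + η • n t) ((1 + η * κ s) • deriv g s) s := by
    intro s
    have := (hgd s).add ((hnd s).const_smul η)
    refine this.congr_deriv (Eq.symm ?_)
    rw [add_smul, one_smul, smul_smul]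
  -- differentiability of κ
  have hκd : DifferentiableAt ℝ κ ξ := by
    have hfun : κ = fun s =>
        (deriv g s 0 * deriv (deriv g) s 1 - deriv g s 1 * deriv (deriv g) s 0) /
          ‖deriv g s‖ ^ 3 := funext hκ
    rw [hfun]
    have hnum : DifferentiableAt ℝ (fun s =>
        deriv g s 0 * deriv (deriv g) s 1 - deriv g s 1 * deriv (deriv g) s 0) ξ := by
      have h0 := (hd 0 ξ).differentiableAt
      have h1 := (hd 1 ξ).differentiableAt
      have hgg : DifferentiableAt ℝ (deriv (deriv g)) ξ :=
        ((contDiff_succ_iff_deriv (n := 1)).1 (by exact_mod_cast hg')).2.2.differentiable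
          (by norm_num) ξ
      have h0' : DifferentiableAt ℝ (fun s => deriv (deriv g) s 0) ξ :=
        ((EuclideanSpace.proj (0 : Fin 2)).differentiableAt.comp ξ hgg :)
      have h1' : DifferentiableAt ℝ (fun s => deriv (deriv g) s 1) ξ :=
        ((EuclideanSpace.proj (1 : Fin 2)).differentiableAt.comp ξ hgg :)
      exact (h0.mul h1').sub (h1.mul h0')
    have hden : DifferentiableAt ℝ (fun s => ‖deriv g s‖ ^ 3) ξ :=
      ((hLd ξ).differentiableAt).pow 3
    exact hnum.div hden (pow_ne_zero 3 (hpos ξ).ne')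
  -- smoothness of u near x₀
  have hud : ∀ y ∈ N, DifferentiableAt ℝ u y := fun y hy =>
    (hu.contDiffAt (hN.mem_nhds hy)).differentiableAt (by norm_num)
  have hu2 : ContDiffAt ℝ 2 u (g ξ + η • n ξ) := hu.contDiffAt (hN.mem_nhds hx)
  have hfd : DifferentiableAt ℝ (fderiv ℝ u) (g ξ + η • n ξ) := by
    have : ContDiffAt ℝ 1 (fderiv ℝ u) (g ξ + η • n ξ) :=
      hu2.fderiv_right (m := 1) (by norm_num)
    exact this.differentiableAt (by norm_num)
  set D1 := fderiv ℝ u (g ξ + η • n ξ) with hD1def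
  set D2 := fderiv ℝ (fderiv ℝ u) (g ξ + η • n ξ) with hD2def
  have hD2 : HasFDerivAt (fderiv ℝ u) D2 (g ξ + η • n ξ) := hfd.hasFDerivAt
  -- the Laplacian as a sum of second derivatives
  have hlap : lap2 u (g ξ + η • n ξ)
      = D2 (EuclideanSpace.single 0 1) (EuclideanSpace.single 0 1)
        + D2 (EuclideanSpace.single 1 1) (EuclideanSpace.single 1 1) := by
    have heval : ∀ v w : EuclideanSpace ℝ (Fin 2),
        fderiv ℝ (fun y => fderiv ℝ u y v) (g ξ + η • n ξ) w = D2 w v := by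
      intro v w
      rw [fderiv_clm_apply hfd (differentiableAt_const v)]
      simp
      rfl
    simp only [lap2, Fin.sum_univ_two, heval]
  -- derivatives of the η-curve
  have hφd : ∀ t : ℝ, HasDerivAt (fun t => g ξ + t • n ξ) (n ξ) t := by
    intro t
    have := ((hasDerivAt_id t).smul_const (n ξ)).const_add (g ξ)
    simpa using this
  have hφmem : ∀ᶠ t in nhds η, g ξ + t • n ξ ∈ N := by
    have hcont : Continuous fun t : ℝ => g ξ + t • n ξ :=
      continuous_const.add (continuous_id.smul continuous_const)
    exact hcont.continuousAt.preimage_mem_nhds (hN.mem_nhds hx)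
  have hc1d : deriv (fun t => u (g ξ + t • n ξ)) η = D1 (n ξ) :=
    ((hud _ hx).hasFDerivAt.comp_hasDerivAt η (hφd η)).deriv
  have hder1ev : deriv (fun t => u (g ξ + t • n ξ))
      =ᶠ[nhds η] fun t => fderiv ℝ u (g ξ + t • n ξ) (n ξ) :=
    hφmem.mono fun t ht => ((hud _ ht).hasFDerivAt.comp_hasDerivAt t (hφd t)).deriv
  have hc1dd : iteratedDeriv 2 (fun t => u (g ξ + t • n ξ)) η = D2 (n ξ) (n ξ) := by
    rw [iteratedDeriv_two, hder1ev.deriv_eq]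
    have hA : HasDerivAt (fun t => fderiv ℝ u (g ξ + t • n ξ)) (D2 (n ξ)) η :=
      hD2.comp_hasDerivAt η (hφd η)
    have := (hA.clm_apply (hasDerivAt_const η (n ξ))).deriv
    simpa using this
  -- derivatives of the ξ-curve
  have hncont : Continuous n := (Differentiable.continuous fun s => (hnd s).differentiableAt)
  have hγmem : ∀ᶠ s in nhds ξ, g s + η • n s ∈ N := by
    have hcont : Continuous fun s : ℝ => g s + η • n s :=
      (hg.continuous).add (hncont.const_smul η)
    exact hcont.continuousAt.preimage_mem_nhds (hN.mem_nhds hx)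
  have hc2d : deriv (fun s => u (g s + η • n s)) ξ = D1 ((1 + η * κ ξ) • deriv g ξ) :=
    ((hud _ hx).hasFDerivAt.comp_hasDerivAt ξ (hγd ξ)).deriv
  have hder2ev : deriv (fun s => u (g s + η • n s))
      =ᶠ[nhds ξ] fun s => fderiv ℝ u (g s + η • n s) ((1 + η * κ s) • deriv g s) :=
    hγmem.mono fun s hs => ((hud _ hs).hasFDerivAt.comp_hasDerivAt s (hγd s)).deriv
  have hc2dd : iteratedDeriv 2 (fun s => u (g s + η • n s)) ξ
      = D2 ((1 + η * κ ξ) • deriv g ξ) ((1 + η * κ ξ) • deriv g ξ)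
        + D1 ((η * deriv κ ξ) • deriv g ξ + (1 + η * κ ξ) • deriv (deriv g) ξ) := by
    rw [iteratedDeriv_two, hder2ev.deriv_eq]
    have hA : HasDerivAt (fun s => fderiv ℝ u (g s + η • n s)) (D2 ((1 + η * κ ξ) • deriv g ξ)) ξ :=
      hD2.comp_hasDerivAt ξ (hγd ξ)
    have hsc : HasDerivAt (fun s => 1 + η * κ s) (η * deriv κ ξ) ξ :=
      ((hκd.hasDerivAt).const_mul η).const_add 1
    have hV : HasDerivAt (fun s => (1 + η * κ s) • deriv g s)
        ((η * deriv κ ξ) • deriv g ξ + (1 + η * κ ξ) • deriv (deriv g) ξ) ξ := by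
      have := hsc.smul (hgd2 ξ)
      refine this.congr_deriv (Eq.symm ?_)
      rw [add_comm]
    exact (hA.clm_apply hV).deriv
  clear_value D1 D2
  -- decomposition of g'' in the frame (g', n)
  have hsecond : deriv (deriv g) ξ
      = ((deriv g ξ 0 * deriv (deriv g) ξ 0 + deriv g ξ 1 * deriv (deriv g) ξ 1) / ‖deriv g ξ‖ ^ 2) • deriv g ξ
        + (-(κ ξ * ‖deriv g ξ‖ ^ 2)) • n ξ := by
    have hLne := (hpos ξ).ne'
    have h0 : deriv (deriv g) ξ 0
        = (deriv g ξ 0 * deriv (deriv g) ξ 0 + deriv g ξ 1 * deriv (deriv g) ξ 1) / ‖deriv g ξ‖ ^ 2 * deriv g ξ 0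
          + -((deriv g ξ 0 * deriv (deriv g) ξ 1 - deriv g ξ 1 * deriv (deriv g) ξ 0) / ‖deriv g ξ‖ ^ 3 * ‖deriv g ξ‖ ^ 2)
            * n ξ 0 := by
      rw [hn0 ξ]
      field_simp
      linear_combination (deriv (deriv g) ξ 0) * hL2 ξ
    have h1 : deriv (deriv g) ξ 1
        = (deriv g ξ 0 * deriv (deriv g) ξ 0 + deriv g ξ 1 * deriv (deriv g) ξ 1) / ‖deriv g ξ‖ ^ 2 * deriv g ξ 1
          + -((deriv g ξ 0 * deriv (deriv g) ξ 1 - deriv g ξ 1 * deriv (deriv g) ξ 0) / ‖deriv g ξ‖ ^ 3 * ‖deriv g ξ‖ ^ 2)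
            * n ξ 1 := by
      rw [hn1 ξ]
      field_simp
      linear_combination (deriv (deriv g) ξ 1) * hL2 ξ
    ext i
    fin_cases i
    · simpa only [PiLp.add_apply, PiLp.smul_apply, smul_eq_mul, hκ ξ, Fin.zero_eta] using h0
    · simpa only [PiLp.add_apply, PiLp.smul_apply, smul_eq_mul, hκ ξ, Fin.mk_one] using h1
  -- the trace identity
  have hstep : D2 (EuclideanSpace.single 0 1) (EuclideanSpace.single 0 1)
        + D2 (EuclideanSpace.single 1 1) (EuclideanSpace.single 1 1)
      = D2 (n ξ) (n ξ) + (1 / ‖deriv g ξ‖ ^ 2) * D2 (deriv g ξ) (deriv g ξ) := by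
    have hLne := (hpos ξ).ne'
    rw [bilin_expand D2 (n ξ) (n ξ), bilin_expand D2 (deriv g ξ) (deriv g ξ), hn0 ξ, hn1 ξ]
    field_simp
    linear_combination ((D2 (EuclideanSpace.single 0 1) (EuclideanSpace.single 0 1)
      + D2 (EuclideanSpace.single 1 1) (EuclideanSpace.single 1 1))) * hL2 ξ
  have hW : D1 ((η * deriv κ ξ) • deriv g ξ + (1 + η * κ ξ) • deriv (deriv g) ξ)
      = (η * deriv κ ξ) * D1 (deriv g ξ)
        + (1 + η * κ ξ) * (((deriv g ξ 0 * deriv (deriv g) ξ 0 + deriv g ξ 1 * deriv (deriv g) ξ 1) / ‖deriv g ξ‖ ^ 2) * D1 (deriv g ξ)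
            + (-(κ ξ * ‖deriv g ξ‖ ^ 2)) * D1 (n ξ)) := by
    conv_lhs => rw [hsecond]
    simp [map_add, map_smul, smul_smul]
    ring
  have hP2 : D2 ((1 + η * κ ξ) • deriv g ξ) ((1 + η * κ ξ) • deriv g ξ)
      = (1 + η * κ ξ) ^ 2 * D2 (deriv g ξ) (deriv g ξ) := by
    simp [ContinuousLinearMap.map_smul, ContinuousLinearMap.smul_apply, smul_eq_mul]
    ring
  have hD1P : D1 ((1 + η * κ ξ) • deriv g ξ) = (1 + η * κ ξ) * D1 (deriv g ξ) := by
    simp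
  rw [hlap, hc1d, hc1dd, hc2d, hc2dd, hstep, hW, hP2, hD1P, hJ0, hJ1, hJ2, hψ]
  have hLne := (hpos ξ).ne'
  field_simp
  ring
end
end

section
/- Let K be an interface element of diameter h contained in a tubular neighborhood of Γ where the Frenet transformation P with inverse R = (η,ξ) satisfies ‖∇ξ(x)‖ ≤ C₁ and |det DP| ≥ c₀ > 0. If K is a square of side proportional to h and the Frenet fictitious element K̂_F = [−h,h] × Γ̂ with ξ(K) ⊆ Γ̂ and |Γ̂| = diam(ξ(K)), then c h ≤ |Γ̂| ≤ C h for constants c, C depending only on c₀, C₁ (and not on h, the interface location, or the coefficients). -/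
noncomputable section

open MeasureTheory

set_option maxHeartbeats 1000000

/-- A square (interface element) of side `s` with lower-left corner `p`. -/
def sqElem (p : EuclideanSpace ℝ (Fin 2)) (s : ℝ) : Set (EuclideanSpace ℝ (Fin 2)) :=
  {x | ∀ i : Fin 2, x i ∈ Set.Icc (p i) (p i + s)}

/-- `|Γ̂| ≃ h`: the length of the Frenet fictitious interface `Γ̂` (the `ξ`-image of the
interface element `K`) is comparable to the element diameter `h`, with constants depending
only on the Jacobian bounds `c₀, C₁` and not on `h`, the interface location, or coefficients. -/
theorem fictitious_interface_length_comparable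
    (c₀ C₁ : ℝ) (hc₀ : 0 < c₀) (hC₁ : 0 < C₁) :
    ∃ c C : ℝ, 0 < c ∧ 0 < C ∧
      ∀ h : ℝ, 0 < h →
      ∀ (p : EuclideanSpace ℝ (Fin 2)) (ηc ξc : EuclideanSpace ℝ (Fin 2) → ℝ) (a b : ℝ),
        a ≤ b →
        (∀ x ∈ sqElem p (h / Real.sqrt 2), ξc x ∈ Set.Icc a b) →
        b - a = Metric.diam (ξc '' sqElem p (h / Real.sqrt 2)) →
        (∀ x ∈ sqElem p (h / Real.sqrt 2), |ηc x| ≤ h) →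
        (∀ x ∈ sqElem p (h / Real.sqrt 2),
          DifferentiableAt ℝ ηc x ∧ DifferentiableAt ℝ ξc x) →
        (∀ x ∈ sqElem p (h / Real.sqrt 2),
          ‖fderiv ℝ ηc x‖ ≤ C₁ ∧ ‖fderiv ℝ ξc x‖ ≤ C₁) →
        Set.InjOn (fun x => (ηc x, ξc x)) (sqElem p (h / Real.sqrt 2)) →
        (∀ x ∈ sqElem p (h / Real.sqrt 2),
          c₀ ≤ |Matrix.det
              !![fderiv ℝ ηc x (EuclideanSpace.single 0 1),
                 fderiv ℝ ηc x (EuclideanSpace.single 1 1);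
                 fderiv ℝ ξc x (EuclideanSpace.single 0 1),
                 fderiv ℝ ξc x (EuclideanSpace.single 1 1)]| ∧
          |Matrix.det
              !![fderiv ℝ ηc x (EuclideanSpace.single 0 1),
                 fderiv ℝ ηc x (EuclideanSpace.single 1 1);
                 fderiv ℝ ξc x (EuclideanSpace.single 0 1),
                 fderiv ℝ ξc x (EuclideanSpace.single 1 1)]| ≤ C₁) →
        c * h ≤ b - a ∧ b - a ≤ C * h := by
  refine ⟨c₀ / 4, C₁, by positivity, hC₁, ?_⟩
  intro h hh p ηc ξc a b hab hξmem hdiam hηbd hdiff hgrad hinj hdet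
  set s : ℝ := h / Real.sqrt 2 with hs
  have hsqrt2 : (0:ℝ) < Real.sqrt 2 := Real.sqrt_pos.2 (by norm_num)
  have hs0 : 0 < s := by positivity
  have hss : s * s = h * h / 2 := by
    rw [hs, div_mul_div_comm, Real.mul_self_sqrt (by norm_num)]
  set K : Set (EuclideanSpace ℝ (Fin 2)) := sqElem p s with hK
  -- pairwise distance bound inside K
  have hdistK : ∀ x ∈ K, ∀ y ∈ K, dist x y ≤ h := by
    intro x hx y hy
    rw [EuclideanSpace.dist_eq]
    have : ∑ i : Fin 2, dist (x i) (y i) ^ 2 ≤ h ^ 2 := by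
      have hbd : ∀ i : Fin 2, dist (x i) (y i) ^ 2 ≤ s ^ 2 := by
        intro i
        have h1 := hx i; have h2 := hy i
        simp only [Set.mem_Icc] at h1 h2
        have : |x i - y i| ≤ s := abs_sub_le_iff.2 ⟨by linarith, by linarith⟩
        calc dist (x i) (y i) ^ 2 = |x i - y i| ^ 2 := by rw [Real.dist_eq]
          _ ≤ s ^ 2 := by nlinarith [abs_nonneg (x i - y i)]
      calc ∑ i : Fin 2, dist (x i) (y i) ^ 2 ≤ ∑ _i : Fin 2, s ^ 2 :=
            Finset.sum_le_sum fun i _ => hbd i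
        _ = 2 * s ^ 2 := by rw [Fin.sum_univ_two]; ring
        _ = h ^ 2 := by nlinarith
    calc Real.sqrt (∑ i : Fin 2, dist (x i) (y i) ^ 2) ≤ Real.sqrt (h ^ 2) :=
          Real.sqrt_le_sqrt this
      _ = h := Real.sqrt_sq hh.le
  -- convexity of K
  have hconv : Convex ℝ K := by
    intro x hx y hy t u ht hu htu i
    have : (t • x + u • y) i = t * x i + u * y i := rfl
    rw [this]
    exact (convex_Icc (p i) (p i + s)) (hx i) (hy i) ht hu htu
  -- upper bound
  have hub : b - a ≤ C₁ * h := by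
    rw [hdiam]
    apply Metric.diam_le_of_forall_dist_le (by positivity)
    rintro u ⟨x, hx, rfl⟩ v ⟨y, hy, rfl⟩
    have hlip := hconv.norm_image_sub_le_of_norm_fderiv_le
      (fun z hz => (hdiff z hz).2) (fun z hz => (hgrad z hz).2) hy hx
    calc dist (ξc x) (ξc y) = ‖ξc x - ξc y‖ := rfl
      _ ≤ C₁ * ‖x - y‖ := hlip
      _ ≤ C₁ * h := by
          have := hdistK x hx y hy
          rw [dist_eq_norm] at this
          nlinarith
  refine ⟨?_, hub⟩
  -- lower bound via the area formula
  classical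
  -- the map F = (η, ξ) into Euclidean space
  set e := PiLp.continuousLinearEquiv 2 ℝ (fun _ : Fin 2 => ℝ) with he
  set F : EuclideanSpace ℝ (Fin 2) → EuclideanSpace ℝ (Fin 2) :=
    fun x => e.symm ![ηc x, ξc x] with hF
  set f' : EuclideanSpace ℝ (Fin 2) → (EuclideanSpace ℝ (Fin 2) →L[ℝ] EuclideanSpace ℝ (Fin 2)) :=
    fun x => ((e.symm : (Fin 2 → ℝ) →L[ℝ] EuclideanSpace ℝ (Fin 2)).comp
      (ContinuousLinearMap.pi ![fderiv ℝ ηc x, fderiv ℝ ξc x])) with hf'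
  have hFderiv : ∀ x ∈ K, HasFDerivWithinAt F (f' x) K x := by
    intro x hx
    have hg : HasFDerivAt (fun x => (![ηc x, ξc x] : Fin 2 → ℝ))
        (ContinuousLinearMap.pi ![fderiv ℝ ηc x, fderiv ℝ ξc x]) x := by
      rw [hasFDerivAt_pi']
      intro i
      fin_cases i
      · simpa [ContinuousLinearMap.proj_pi] using (hdiff x hx).1.hasFDerivAt
      · simpa [ContinuousLinearMap.proj_pi] using (hdiff x hx).2.hasFDerivAt
    exact ((e.symm.hasFDerivAt).comp x hg).hasFDerivWithinAt
  have hFcoord : ∀ x, F x 0 = ηc x ∧ F x 1 = ξc x := by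
    intro x
    constructor <;> rfl
  have hFinj : Set.InjOn F K := by
    intro x hx y hy hxy
    apply hinj hx hy
    have h0 : F x 0 = F y 0 := by rw [hxy]
    have h1 : F x 1 = F y 1 := by rw [hxy]
    rw [(hFcoord x).1, (hFcoord y).1] at h0
    rw [(hFcoord x).2, (hFcoord y).2] at h1
    simp [h0, h1]
  have hdet' : ∀ x, (f' x).det =
      Matrix.det !![fderiv ℝ ηc x (EuclideanSpace.single 0 1),
                 fderiv ℝ ηc x (EuclideanSpace.single 1 1);
                 fderiv ℝ ξc x (EuclideanSpace.single 0 1),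
                 fderiv ℝ ξc x (EuclideanSpace.single 1 1)] := by
    intro x
    set bb := (EuclideanSpace.basisFun (Fin 2) ℝ).toBasis with hbb
    rw [hf', ContinuousLinearMap.det, ← LinearMap.det_toMatrix bb]
    congr 1
    ext i j
    rw [LinearMap.toMatrix_apply]
    fin_cases i <;> fin_cases j <;>
      simp [hbb, he, OrthonormalBasis.coe_toBasis_repr_apply, OrthonormalBasis.coe_toBasis,
        EuclideanSpace.basisFun_repr, EuclideanSpace.basisFun_apply,
        ContinuousLinearMap.pi_apply]
  -- measurability of K
  have hKeq : K = ⇑((MeasurableEquiv.toLp 2 (Fin 2 → ℝ)).symm) ⁻¹'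
      (Set.univ.pi fun i => Set.Icc (p i) (p i + s)) := by
    ext x
    simp only [hK, sqElem, Set.mem_preimage, Set.mem_pi, Set.mem_univ, Set.mem_setOf_eq,
      true_implies]
    rfl
  have hKmeas : MeasurableSet K := by
    rw [hKeq]
    exact ((MeasurableEquiv.toLp 2 (Fin 2 → ℝ)).symm).measurable
      (MeasurableSet.univ_pi fun i => measurableSet_Icc)
  have hKvol : volume K = ENNReal.ofReal s * ENNReal.ofReal s := by
    rw [hKeq, (EuclideanSpace.volume_preserving_symm_measurableEquiv_toLp (Fin 2)).measure_preimage
      ((MeasurableSet.univ_pi fun i => measurableSet_Icc).nullMeasurableSet), volume_pi_pi]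
    simp [Real.volume_Icc, Fin.prod_univ_two, sq]
  -- the image is contained in a box
  set B : Set (EuclideanSpace ℝ (Fin 2)) := ⇑((MeasurableEquiv.toLp 2 (Fin 2 → ℝ)).symm) ⁻¹'
      (Set.univ.pi fun i => Set.Icc (![-h, a] i) (![h, b] i)) with hB
  have hBsub : F '' K ⊆ B := by
    rintro _ ⟨x, hx, rfl⟩
    have h0 : ((MeasurableEquiv.toLp 2 (Fin 2 → ℝ)).symm) (F x) = ![ηc x, ξc x] := rfl
    rw [hB, Set.mem_preimage, h0, Set.mem_pi]
    intro i _
    fin_cases i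
    · simpa [abs_le] using hηbd x hx
    · simpa using hξmem x hx
  have hBvol : volume B = ENNReal.ofReal (2 * h) * ENNReal.ofReal (b - a) := by
    rw [hB, (EuclideanSpace.volume_preserving_symm_measurableEquiv_toLp (Fin 2)).measure_preimage
      ((MeasurableSet.univ_pi fun i => measurableSet_Icc).nullMeasurableSet),
      volume_pi_pi, Fin.prod_univ_two]
    simp only [Matrix.cons_val_zero, Matrix.cons_val_one, Matrix.head_cons, Real.volume_Icc]
    rw [show h - -h = 2 * h by ring]
  -- area formula
  have key := lintegral_abs_det_fderiv_eq_addHaar_image volume hKmeas hFderiv hFinj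
  have hge : ENNReal.ofReal c₀ * volume K ≤ volume (F '' K) := by
    rw [← key, ← setLIntegral_const K (ENNReal.ofReal c₀)]
    apply setLIntegral_mono' hKmeas
    intro x hx
    apply ENNReal.ofReal_le_ofReal
    rw [hdet' x]
    exact (hdet x hx).1
  have hle : volume (F '' K) ≤ volume B := measure_mono hBsub
  have hmain : ENNReal.ofReal (c₀ * (s * s)) ≤ ENNReal.ofReal (2 * h * (b - a)) := by
    rw [ENNReal.ofReal_mul hc₀.le, ENNReal.ofReal_mul hs0.le,
      ENNReal.ofReal_mul (by positivity : (0:ℝ) ≤ 2 * h)]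
    calc ENNReal.ofReal c₀ * (ENNReal.ofReal s * ENNReal.ofReal s)
        = ENNReal.ofReal c₀ * volume K := by rw [hKvol]
      _ ≤ volume (F '' K) := hge
      _ ≤ volume B := hle
      _ = ENNReal.ofReal (2 * h) * ENNReal.ofReal (b - a) := hBvol
  have hreal : c₀ * (s * s) ≤ 2 * h * (b - a) :=
    (ENNReal.ofReal_le_ofReal_iff (by nlinarith)).1 hmain
  rw [hss] at hreal
  nlinarith
end
end

section
/- Let S = [0,h] × Γ̂ with Γ̂ an interval of length ≃ h, and let w ∈ Q^m(S) be a tensor-product polynomial of degree ≤ m in each variable. Then for all nonnegative integers k ≤ m and l, ‖∂_η^k ∂_ξ^l w‖_{L²(S)} ≤ C Σ_{j=k}^{m} h^{j−k−l+1/2} ‖∂_η^j w(0,·)‖_{L²(Γ̂)}, with C independent of h and w, using the Taylor expansion w(η,ξ) = Σ_{j=0}^m (η^j/j!) ∂_η^j w(0,ξ) and the one-dimensional polynomial inverse inequality ‖q'‖_{L²(Γ̂)} ≤ C h^{-1} ‖q‖_{L²(Γ̂)} for q ∈ P^m(Γ̂). -/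
open MeasureTheory

noncomputable section

namespace QmTraceAux

open Polynomial intervalIntegral

set_option maxHeartbeats 1000000

/-- polynomial with coefficient vector `v` -/
def Pc (m : ℕ) (v : Fin (m + 1) → ℝ) : ℝ[X] :=
  ∑ i : Fin (m + 1), C (v i) * X ^ (i : ℕ)

lemma coeff_Pc (m : ℕ) (v : Fin (m + 1) → ℝ) (n : ℕ) :
    (Pc m v).coeff n = if h : n < m + 1 then v ⟨n, h⟩ else 0 := by
  rw [Pc, Polynomial.finset_sum_coeff]
  simp only [coeff_C_mul, coeff_X_pow]
  split
  · next h =>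
    rw [Finset.sum_eq_single (⟨n, h⟩ : Fin (m + 1))]
    · simp
    · intro b _ hb
      simp only [mul_ite, mul_one, mul_zero, ite_eq_right_iff]
      intro hbn
      exact absurd (Fin.ext hbn.symm : b = ⟨n, h⟩) hb
    · simp
  · next h =>
    apply Finset.sum_eq_zero
    intro b _
    have : n ≠ (b : ℕ) := by omega
    simp [this]
  
lemma Pc_eq_of_natDegree_le (m : ℕ) (p : ℝ[X]) (hp : p.natDegree ≤ m) :
    Pc m (fun i => p.coeff i) = p := by
  ext n
  rw [coeff_Pc]
  split
  · rfl
  · next h => exact (Polynomial.coeff_eq_zero_of_natDegree_lt (by omega)).symm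

lemma natDegree_Pc_le (m : ℕ) (v : Fin (m + 1) → ℝ) : (Pc m v).natDegree ≤ m := by
  apply Polynomial.natDegree_sum_le_of_forall_le
  intro i _
  refine le_trans (Polynomial.natDegree_C_mul_le _ _) ?_
  exact le_trans (Polynomial.natDegree_X_pow_le _) (by omega)

lemma Pc_smul (m : ℕ) (t : ℝ) (v : Fin (m + 1) → ℝ) :
    Pc m (t • v) = Polynomial.C t * Pc m v := by
  rw [Pc, Pc, Finset.mul_sum]
  refine Finset.sum_congr rfl fun i _ => ?_
  simp [mul_assoc, Polynomial.C_mul]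

lemma iteratedDeriv_eval (n : ℕ) (p : ℝ[X]) :
    iteratedDeriv n (fun x => p.eval x) = fun x => (derivative^[n] p).eval x := by
  induction n with
  | zero => simp
  | succ n ih =>
    rw [iteratedDeriv_succ, ih]
    funext x
    rw [Polynomial.deriv, Function.iterate_succ_apply']

lemma eval_iterate_derivative_Pc (m k : ℕ) (v : Fin (m + 1) → ℝ) (x : ℝ) :
    (derivative^[k] (Pc m v)).eval x
      = ∑ i : Fin (m + 1), v i * ((i : ℕ).descFactorial k : ℝ) * x ^ ((i : ℕ) - k) := by
  rw [Pc, Polynomial.iterate_derivative_sum, Polynomial.eval_finset_sum]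
  refine Finset.sum_congr rfl fun i _ => ?_
  rw [Polynomial.iterate_derivative_C_mul, Polynomial.iterate_derivative_X_pow_eq_natCast_mul]
  simp [mul_assoc]

lemma sq_nonneg_integral {a b : ℝ} (hab : a ≤ b) (f : ℝ → ℝ) :
    0 ≤ ∫ x in a..b, (f x) ^ 2 :=
  intervalIntegral.integral_nonneg hab fun x _ => sq_nonneg _

lemma cauchy_schwarz {a b : ℝ} (hab : a ≤ b) {f g : ℝ → ℝ}
    (hf : Continuous f) (hg : Continuous g) :
    |∫ x in a..b, f x * g x| ≤
      Real.sqrt (∫ x in a..b, (f x) ^ 2) * Real.sqrt (∫ x in a..b, (g x) ^ 2) := by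
  set A := ∫ x in a..b, (f x) ^ 2 with hA
  set B := ∫ x in a..b, (g x) ^ 2 with hB
  set X := ∫ x in a..b, f x * g x with hX
  have hA0 : 0 ≤ A := sq_nonneg_integral hab f
  have hB0 : 0 ≤ B := sq_nonneg_integral hab g
  have key : ∀ t : ℝ, 0 ≤ A * (t * t) + (2 * X) * t + B := by
    intro t
    have i1 : IntervalIntegrable (fun x => t ^ 2 * f x ^ 2) volume a b :=
      (continuous_const.mul (hf.pow 2)).intervalIntegrable _ _
    have i2 : IntervalIntegrable (fun x => (2 * t) * (f x * g x)) volume a b :=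
      (continuous_const.mul (hf.mul hg)).intervalIntegrable _ _
    have i3 : IntervalIntegrable (fun x => g x ^ 2) volume a b :=
      (hg.pow 2).intervalIntegrable _ _
    have h1 : ∀ x : ℝ, (t * f x + g x) ^ 2
        = t ^ 2 * (f x) ^ 2 + (2 * t) * (f x * g x) + (g x) ^ 2 := by intro x; ring
    have h2 : (0:ℝ) ≤ ∫ x in a..b, (t * f x + g x) ^ 2 :=
      intervalIntegral.integral_nonneg hab fun x _ => sq_nonneg _
    have h3 : (∫ x in a..b, (t * f x + g x) ^ 2)
        = t ^ 2 * A + (2 * t) * X + B := by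
      simp_rw [h1]
      rw [intervalIntegral.integral_add (i1.add i2) i3,
        intervalIntegral.integral_add i1 i2,
        intervalIntegral.integral_const_mul, intervalIntegral.integral_const_mul]
    nlinarith [h2, h3]
  have hd : discrim A (2 * X) B ≤ 0 := discrim_le_zero key
  rw [discrim] at hd
  have hX2 : X ^ 2 ≤ A * B := by nlinarith
  calc |X| = Real.sqrt (X ^ 2) := (Real.sqrt_sq_eq_abs X).symm
    _ ≤ Real.sqrt (A * B) := Real.sqrt_le_sqrt hX2
    _ = Real.sqrt A * Real.sqrt B := Real.sqrt_mul hA0 B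

/-- 2D Minkowski-type bound for sums of product functions. -/
lemma double_product_bound {n : ℕ} {h a b : ℝ} (h0 : 0 ≤ h) (hab : a ≤ b)
    (f g : Fin n → ℝ → ℝ) (hf : ∀ i, Continuous (f i)) (hg : ∀ i, Continuous (g i)) :
    Real.sqrt (∫ η in (0:ℝ)..h, ∫ ξ in a..b, (∑ i, f i η * g i ξ) ^ 2) ≤
      ∑ i, Real.sqrt (∫ η in (0:ℝ)..h, (f i η) ^ 2) *
        Real.sqrt (∫ ξ in a..b, (g i ξ) ^ 2) := by
  set F : Fin n → ℝ := fun i => Real.sqrt (∫ η in (0:ℝ)..h, (f i η) ^ 2) with hF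
  set G : Fin n → ℝ := fun i => Real.sqrt (∫ ξ in a..b, (g i ξ) ^ 2) with hG
  have hF0 : ∀ i, 0 ≤ F i := fun i => Real.sqrt_nonneg _
  have hG0 : ∀ i, 0 ≤ G i := fun i => Real.sqrt_nonneg _
  have inner_eq : ∀ η : ℝ, (∫ ξ in a..b, (∑ i, f i η * g i ξ) ^ 2)
      = ∑ i, ∑ i', (f i η * f i' η) * ∫ ξ in a..b, g i ξ * g i' ξ := by
    intro η
    have e1 : ∀ ξ : ℝ, (∑ i, f i η * g i ξ) ^ 2
        = ∑ i, ∑ i', (f i η * f i' η) * (g i ξ * g i' ξ) := by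
      intro ξ
      rw [sq, Finset.sum_mul_sum]
      exact Finset.sum_congr rfl fun i _ => Finset.sum_congr rfl fun i' _ => by ring
    simp_rw [e1]
    have e2 : (∫ ξ in a..b, ∑ i : Fin n, ∑ i' : Fin n, f i η * f i' η * (g i ξ * g i' ξ))
        = ∑ i : Fin n, ∫ ξ in a..b, ∑ i' : Fin n, f i η * f i' η * (g i ξ * g i' ξ) := by
      apply intervalIntegral.integral_finset_sum
      intro i _
      exact (continuous_finset_sum Finset.univ (fun i' _ =>
        continuous_const.mul ((hg i).mul (hg i')))).intervalIntegrable _ _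
    rw [e2]
    refine Finset.sum_congr rfl fun i _ => ?_
    have e3 : (∫ ξ in a..b, ∑ i' : Fin n, f i η * f i' η * (g i ξ * g i' ξ))
        = ∑ i' : Fin n, ∫ ξ in a..b, f i η * f i' η * (g i ξ * g i' ξ) := by
      apply intervalIntegral.integral_finset_sum
      intro i' _
      exact (continuous_const.mul ((hg i).mul (hg i'))).intervalIntegrable _ _
    rw [e3]
    exact Finset.sum_congr rfl fun i' _ => intervalIntegral.integral_const_mul _ _
  have outer_eq : (∫ η in (0:ℝ)..h, ∫ ξ in a..b, (∑ i, f i η * g i ξ) ^ 2)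
      = ∑ i, ∑ i', (∫ η in (0:ℝ)..h, f i η * f i' η) * ∫ ξ in a..b, g i ξ * g i' ξ := by
    simp_rw [inner_eq]
    have e2 : (∫ η in (0:ℝ)..h, ∑ i : Fin n, ∑ i' : Fin n,
          f i η * f i' η * ∫ ξ in a..b, g i ξ * g i' ξ)
        = ∑ i : Fin n, ∫ η in (0:ℝ)..h, ∑ i' : Fin n,
            f i η * f i' η * ∫ ξ in a..b, g i ξ * g i' ξ := by
      apply intervalIntegral.integral_finset_sum
      intro i _
      exact (continuous_finset_sum Finset.univ (fun i' _ =>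
        ((hf i).mul (hf i')).mul continuous_const)).intervalIntegrable _ _
    rw [e2]
    refine Finset.sum_congr rfl fun i _ => ?_
    have e3 : (∫ η in (0:ℝ)..h, ∑ i' : Fin n,
          f i η * f i' η * ∫ ξ in a..b, g i ξ * g i' ξ)
        = ∑ i' : Fin n, ∫ η in (0:ℝ)..h,
            f i η * f i' η * ∫ ξ in a..b, g i ξ * g i' ξ := by
      apply intervalIntegral.integral_finset_sum
      intro i' _
      exact (((hf i).mul (hf i')).mul continuous_const).intervalIntegrable _ _
    rw [e3]
    exact Finset.sum_congr rfl fun i' _ => intervalIntegral.integral_mul_const _ _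
  have bound : (∫ η in (0:ℝ)..h, ∫ ξ in a..b, (∑ i, f i η * g i ξ) ^ 2)
      ≤ (∑ i, F i * G i) ^ 2 := by
    rw [outer_eq, sq, Finset.sum_mul_sum]
    refine Finset.sum_le_sum fun i _ => Finset.sum_le_sum fun i' _ => ?_
    have c1 := cauchy_schwarz (le_trans (le_refl 0) h0 : (0:ℝ) ≤ h) (hf i) (hf i')
    have c2 := cauchy_schwarz hab (hg i) (hg i')
    calc (∫ η in (0:ℝ)..h, f i η * f i' η) * ∫ ξ in a..b, g i ξ * g i' ξ
        ≤ |(∫ η in (0:ℝ)..h, f i η * f i' η) * ∫ ξ in a..b, g i ξ * g i' ξ| := le_abs_self _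
      _ = |∫ η in (0:ℝ)..h, f i η * f i' η| * |∫ ξ in a..b, g i ξ * g i' ξ| := abs_mul _ _
      _ ≤ (F i * F i') * (G i * G i') := by
          exact mul_le_mul c1 c2 (abs_nonneg _) (mul_nonneg (hF0 i) (hF0 i'))
      _ = (F i * G i) * (F i' * G i') := by ring
  calc Real.sqrt (∫ η in (0:ℝ)..h, ∫ ξ in a..b, (∑ i, f i η * g i ξ) ^ 2)
      ≤ Real.sqrt ((∑ i, F i * G i) ^ 2) := Real.sqrt_le_sqrt bound
    _ = ∑ i, F i * G i := by
        rw [Real.sqrt_sq (Finset.sum_nonneg fun i _ => mul_nonneg (hF0 i) (hG0 i))]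

lemma eval_Pc (m : ℕ) (v : Fin (m + 1) → ℝ) (x : ℝ) :
    (Pc m v).eval x = ∑ i : Fin (m + 1), v i * x ^ (i : ℕ) := by
  simpa using eval_iterate_derivative_Pc m 0 v x

/-- squared L² norm on `[0,1]` of `Pc m v`, in closed form -/
lemma Qfun_eq (m : ℕ) (v : Fin (m + 1) → ℝ) :
    (∫ x in (0:ℝ)..1, ((Pc m v).eval x) ^ 2)
      = ∑ i : Fin (m + 1), ∑ j : Fin (m + 1),
          v i * v j * ((((i:ℕ):ℝ) + ((j:ℕ):ℝ) + 1))⁻¹ := by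
  have e1 : ∀ x : ℝ, ((Pc m v).eval x) ^ 2
      = ∑ i : Fin (m + 1), ∑ j : Fin (m + 1), (v i * v j) * x ^ ((i:ℕ) + (j:ℕ)) := by
    intro x
    rw [eval_Pc, sq, Finset.sum_mul_sum]
    exact Finset.sum_congr rfl fun i _ => Finset.sum_congr rfl fun j _ => by
      rw [pow_add]; ring
  simp_rw [e1]
  have e2 : (∫ x in (0:ℝ)..1, ∑ i : Fin (m+1), ∑ j : Fin (m+1), (v i * v j) * x ^ ((i:ℕ)+(j:ℕ)))
      = ∑ i : Fin (m+1), ∫ x in (0:ℝ)..1, ∑ j : Fin (m+1), (v i * v j) * x ^ ((i:ℕ)+(j:ℕ)) := by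
    apply intervalIntegral.integral_finset_sum
    intro i _
    exact (continuous_finset_sum Finset.univ (fun j _ =>
      continuous_const.mul (continuous_pow _))).intervalIntegrable _ _
  rw [e2]
  refine Finset.sum_congr rfl fun i _ => ?_
  have e3 : (∫ x in (0:ℝ)..1, ∑ j : Fin (m+1), (v i * v j) * x ^ ((i:ℕ)+(j:ℕ)))
      = ∑ j : Fin (m+1), ∫ x in (0:ℝ)..1, (v i * v j) * x ^ ((i:ℕ)+(j:ℕ)) := by
    apply intervalIntegral.integral_finset_sum
    intro j _
    exact (continuous_const.mul (continuous_pow _)).intervalIntegrable _ _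
  rw [e3]
  refine Finset.sum_congr rfl fun j _ => ?_
  rw [intervalIntegral.integral_const_mul, integral_pow]
  push_cast
  ring

def L2 (m : ℕ) (v : Fin (m + 1) → ℝ) : ℝ :=
  Real.sqrt (∫ x in (0:ℝ)..1, ((Pc m v).eval x) ^ 2)

lemma continuous_L2 (m : ℕ) : Continuous (L2 m) := by
  have : L2 m = fun v => Real.sqrt (∑ i : Fin (m + 1), ∑ j : Fin (m + 1),
      v i * v j * ((((i:ℕ):ℝ) + ((j:ℕ):ℝ) + 1))⁻¹) := by
    funext v; rw [L2, Qfun_eq]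
  rw [this]
  apply Real.continuous_sqrt.comp
  apply continuous_finset_sum
  intro i _
  apply continuous_finset_sum
  intro j _
  exact ((continuous_apply i).mul (continuous_apply j)).mul continuous_const

lemma L2_nonneg (m : ℕ) (v : Fin (m + 1) → ℝ) : 0 ≤ L2 m v := Real.sqrt_nonneg _

lemma L2_smul (m : ℕ) (t : ℝ) (v : Fin (m + 1) → ℝ) :
    L2 m (t • v) = |t| * L2 m v := by
  rw [L2, L2]
  have : ∀ x : ℝ, ((Pc m (t • v)).eval x) ^ 2 = t ^ 2 * ((Pc m v).eval x) ^ 2 := by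
    intro x; rw [Pc_smul]; simp [mul_pow]
  simp_rw [this]
  rw [intervalIntegral.integral_const_mul, Real.sqrt_mul (sq_nonneg t), Real.sqrt_sq_eq_abs]

lemma L2_pos (m : ℕ) {v : Fin (m + 1) → ℝ} (hv : v ≠ 0) : 0 < L2 m v := by
  have hp : Pc m v ≠ 0 := by
    intro h0
    apply hv
    funext i
    have := coeff_Pc m v (i : ℕ)
    rw [h0] at this
    simp only [Polynomial.coeff_zero] at this
    rw [dif_pos i.isLt] at this
    simpa using this.symm
  have hroots : Set.Finite {x : ℝ | (Pc m v).IsRoot x} := Polynomial.finite_setOf_isRoot hp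
  have hIoo : Set.Infinite (Set.Ioo (0:ℝ) 1) := Set.Ioo_infinite one_pos
  obtain ⟨x, hxIoo, hxroot⟩ := (hIoo.diff hroots).nonempty
  have hx01 : x ∈ Set.Icc (0:ℝ) 1 := ⟨hxIoo.1.le, hxIoo.2.le⟩
  have hpos : 0 < ∫ s in (0:ℝ)..1, ((Pc m v).eval s) ^ 2 := by
    apply intervalIntegral.integral_pos one_pos
    · exact ((Pc m v).continuous.pow 2).continuousOn
    · exact fun s _ => sq_nonneg _
    · refine ⟨x, hx01, ?_⟩
      have : (Pc m v).eval x ≠ 0 := hxroot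
      positivity
  exact Real.sqrt_pos.mpr hpos

/-- derivative coefficient vector -/
def dv (m : ℕ) (v : Fin (m + 1) → ℝ) : Fin (m + 1) → ℝ :=
  fun i => (derivative (Pc m v)).coeff (i : ℕ)

lemma Pc_dv (m : ℕ) (v : Fin (m + 1) → ℝ) : Pc m (dv m v) = derivative (Pc m v) := by
  apply Pc_eq_of_natDegree_le
  exact le_trans (natDegree_derivative_le _) (by
    have := natDegree_Pc_le m v; omega)

lemma dv_smul (m : ℕ) (t : ℝ) (v : Fin (m + 1) → ℝ) :
    dv m (t • v) = t • dv m v := by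
  funext i
  simp [dv, Pc_smul, Polynomial.derivative_C_mul, Polynomial.coeff_C_mul]

lemma continuous_dv (m : ℕ) : Continuous (dv m) := by
  apply continuous_pi
  intro i
  have : (fun v => dv m v i)
      = fun v : Fin (m+1) → ℝ =>
        ((Pc m v).coeff ((i : ℕ) + 1)) * (((i : ℕ) : ℝ) + 1) := by
    funext v; rw [dv, Polynomial.coeff_derivative]
  rw [this]
  simp_rw [coeff_Pc]
  by_cases h : (i : ℕ) + 1 < m + 1
  · simp only [dif_pos h]
    exact (continuous_apply _).mul continuous_const
  · simp only [dif_neg h]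
    exact continuous_const.mul continuous_const

/-- inverse estimate on `[0,1]` by compactness -/
lemma exists_inv (m : ℕ) : ∃ CC : ℝ, 1 ≤ CC ∧ ∀ p : ℝ[X], p.natDegree ≤ m →
    Real.sqrt (∫ x in (0:ℝ)..1, ((derivative p).eval x) ^ 2)
      ≤ CC * Real.sqrt (∫ x in (0:ℝ)..1, (p.eval x) ^ 2) := by
  set S := Metric.sphere (0 : Fin (m + 1) → ℝ) 1 with hS
  have hcomp : IsCompact S := isCompact_sphere _ _
  have hne : S.Nonempty := NormedSpace.sphere_nonempty.mpr zero_le_one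
  obtain ⟨u, huS, humin⟩ := hcomp.exists_isMinOn hne (continuous_L2 m).continuousOn
  obtain ⟨w, hwS, hwmax⟩ := hcomp.exists_isMaxOn hne
    ((continuous_L2 m).comp (continuous_dv m)).continuousOn
  have hu0 : u ≠ 0 := by
    intro h
    rw [h] at huS
    simp [hS] at huS
  have hε : 0 < L2 m u := L2_pos m hu0
  set ε := L2 m u
  set M := L2 m (dv m w)
  refine ⟨max 1 (M / ε), le_max_left _ _, ?_⟩
  intro p hp
  set v : Fin (m + 1) → ℝ := fun i => p.coeff i with hv
  have hPv : Pc m v = p := Pc_eq_of_natDegree_le m p hp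
  have goal2 : L2 m (dv m v) ≤ max 1 (M / ε) * L2 m v := by
    by_cases hv0 : v = 0
    · rw [hv0]
      have : dv m (0 : Fin (m+1) → ℝ) = 0 := by
        have := dv_smul m 0 0
        simpa using this
      rw [this]
      have h0 : L2 m (0 : Fin (m+1) → ℝ) = 0 := by
        have := L2_smul m 0 0
        simpa using this
      rw [h0]; simp
    · have hr : 0 < ‖v‖ := norm_pos_iff.mpr hv0
      set r := ‖v‖
      have hu' : r⁻¹ • v ∈ S := by
        simp [hS, norm_smul, abs_inv, abs_of_pos hr, inv_mul_cancel₀ hr.ne']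
        exact inv_mul_cancel₀ hr.ne'
      set u' := r⁻¹ • v with hu'def
      have hvu : v = r • u' := by
        rw [hu'def, smul_smul, mul_inv_cancel₀ hr.ne', one_smul]
      have e1 : L2 m (dv m v) = r * L2 m (dv m u') := by
        rw [hvu, dv_smul, L2_smul, abs_of_pos hr]
      have e2 : L2 m v = r * L2 m u' := by
        rw [hvu, L2_smul, abs_of_pos hr]
      have hMb : L2 m (dv m u') ≤ M := hwmax hu'
      have hεb : ε ≤ L2 m u' := humin hu'
      have hMε : M ≤ max 1 (M / ε) * ε := by
        rw [max_mul_of_nonneg _ _ hε.le]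
        calc M = M / ε * ε := by field_simp
          _ ≤ max (1 * ε) (M / ε * ε) := le_max_right _ _
          _ = max (1 * ε) (M / ε * ε) := rfl
      rw [e1, e2]
      calc r * L2 m (dv m u') ≤ r * M := by
            exact mul_le_mul_of_nonneg_left hMb hr.le
        _ ≤ r * (max 1 (M / ε) * ε) := mul_le_mul_of_nonneg_left hMε hr.le
        _ ≤ r * (max 1 (M / ε) * L2 m u') := by
            apply mul_le_mul_of_nonneg_left _ hr.le
            exact mul_le_mul_of_nonneg_left hεb (le_trans zero_le_one (le_max_left _ _))
        _ = max 1 (M / ε) * (r * L2 m u') := by ring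
  rw [L2, L2, Pc_dv, hPv] at goal2
  exact goal2

/-- iterated inverse estimate on [0,1] -/
lemma inv_iter (m : ℕ) {CC : ℝ} (hCC : 1 ≤ CC)
    (hinv : ∀ p : ℝ[X], p.natDegree ≤ m →
      Real.sqrt (∫ x in (0:ℝ)..1, ((derivative p).eval x) ^ 2)
        ≤ CC * Real.sqrt (∫ x in (0:ℝ)..1, (p.eval x) ^ 2)) :
    ∀ l : ℕ, ∀ p : ℝ[X], p.natDegree ≤ m →
      Real.sqrt (∫ x in (0:ℝ)..1, ((derivative^[l] p).eval x) ^ 2)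
        ≤ CC ^ l * Real.sqrt (∫ x in (0:ℝ)..1, (p.eval x) ^ 2) := by
  intro l
  induction l with
  | zero => intro p hp; simp
  | succ l ih =>
    intro p hp
    have hdp : (derivative p).natDegree ≤ m := le_trans (natDegree_derivative_le _) (by omega)
    calc Real.sqrt (∫ x in (0:ℝ)..1, ((derivative^[l+1] p).eval x) ^ 2)
        = Real.sqrt (∫ x in (0:ℝ)..1, ((derivative^[l] (derivative p)).eval x) ^ 2) := by
          rw [Function.iterate_succ_apply]
      _ ≤ CC ^ l * Real.sqrt (∫ x in (0:ℝ)..1, ((derivative p).eval x) ^ 2) := ih _ hdp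
      _ ≤ CC ^ l * (CC * Real.sqrt (∫ x in (0:ℝ)..1, (p.eval x) ^ 2)) := by
          exact mul_le_mul_of_nonneg_left (hinv p hp)
            (pow_nonneg (le_trans zero_le_one hCC) l)
      _ = CC ^ (l+1) * Real.sqrt (∫ x in (0:ℝ)..1, (p.eval x) ^ 2) := by ring

/-- substitution identity -/
lemma subst_integral {a b : ℝ} (hab : a < b) (u : ℝ[X]) :
    (∫ x in a..b, (u.eval x) ^ 2)
      = (b - a) * ∫ s in (0:ℝ)..1,
          ((u.comp (Polynomial.C a + Polynomial.C (b - a) * Polynomial.X)).eval s) ^ 2 := by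
  set δ := b - a with hδ
  have hδ0 : δ ≠ 0 := by rw [hδ]; linarith
  have e1 : ∀ s : ℝ,
      ((u.comp (Polynomial.C a + Polynomial.C δ * Polynomial.X)).eval s) ^ 2
        = (fun x => (u.eval x) ^ 2) (δ * s + a) := by
    intro s
    simp [Polynomial.eval_comp]
    ring_nf
  simp_rw [e1]
  rw [intervalIntegral.integral_comp_mul_add (fun x => (u.eval x) ^ 2) hδ0 a]
  simp only [smul_eq_mul]
  rw [← mul_assoc, mul_inv_cancel₀ hδ0, one_mul]
  have : δ * 0 + a = a := by ring
  rw [this]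
  have : δ * 1 + a = b := by rw [hδ]; ring
  rw [this]

/-- iterated derivative of composition with affine map -/
lemma iter_deriv_comp_affine (a δ : ℝ) (p : ℝ[X]) (l : ℕ) :
    derivative^[l] (p.comp (Polynomial.C a + Polynomial.C δ * Polynomial.X))
      = Polynomial.C (δ ^ l) *
        ((derivative^[l] p).comp (Polynomial.C a + Polynomial.C δ * Polynomial.X)) := by
  set φ : ℝ[X] := Polynomial.C a + Polynomial.C δ * Polynomial.X with hφ
  have hdφ : derivative φ = Polynomial.C δ := by
    rw [hφ]; simp
  induction l with
  | zero => simp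
  | succ l ih =>
    rw [Function.iterate_succ_apply', ih, Polynomial.derivative_C_mul,
      Polynomial.derivative_comp, hdφ, Function.iterate_succ_apply', pow_succ,
      Polynomial.C_mul]
    ring

/-- inverse estimate on an arbitrary interval -/
lemma inv_on_interval (m : ℕ) {CC : ℝ} (hCC : 1 ≤ CC)
    (hinv : ∀ p : ℝ[X], p.natDegree ≤ m →
      Real.sqrt (∫ x in (0:ℝ)..1, ((derivative p).eval x) ^ 2)
        ≤ CC * Real.sqrt (∫ x in (0:ℝ)..1, (p.eval x) ^ 2))
    {a b : ℝ} (hab : a < b) (l : ℕ) (p : ℝ[X]) (hp : p.natDegree ≤ m) :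
    Real.sqrt (∫ x in a..b, ((derivative^[l] p).eval x) ^ 2)
      ≤ CC ^ l / (b - a) ^ l * Real.sqrt (∫ x in a..b, (p.eval x) ^ 2) := by
  set δ := b - a with hδ
  have hδpos : 0 < δ := by rw [hδ]; linarith
  set φ : ℝ[X] := Polynomial.C a + Polynomial.C δ * Polynomial.X with hφ
  set q : ℝ[X] := p.comp φ with hq
  have hqdeg : q.natDegree ≤ m := by
    refine le_trans (Polynomial.natDegree_comp_le) ?_
    have hφdeg : φ.natDegree ≤ 1 := by
      rw [hφ]
      refine le_trans (Polynomial.natDegree_add_le _ _) ?_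
      simp only [Polynomial.natDegree_C, max_le_iff]
      constructor
      · omega
      · exact le_trans (Polynomial.natDegree_C_mul_le _ _) (by simp)
    calc p.natDegree * φ.natDegree ≤ p.natDegree * 1 :=
          Nat.mul_le_mul_left _ hφdeg
      _ ≤ m := by omega
  set A := ∫ s in (0:ℝ)..1, ((derivative^[l] q).eval s) ^ 2 with hA
  set B := ∫ s in (0:ℝ)..1, (q.eval s) ^ 2 with hB
  have hA0 : 0 ≤ A := intervalIntegral.integral_nonneg zero_le_one fun x _ => sq_nonneg _
  have hB0 : 0 ≤ B := intervalIntegral.integral_nonneg zero_le_one fun x _ => sq_nonneg _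
  have hAB : Real.sqrt A ≤ CC ^ l * Real.sqrt B := inv_iter m hCC hinv l q hqdeg
  -- LHS
  have comp_eq : ∀ s : ℝ, (((derivative^[l] p).comp φ).eval s) ^ 2 = ((derivative^[l] q).eval s) ^ 2 / (δ ^ l) ^ 2 := by
    intro s
    have := iter_deriv_comp_affine a δ p l
    rw [← hφ] at this
    rw [hq, this]
    have hδl : (δ ^ l) ≠ 0 := pow_ne_zero _ hδpos.ne'
    field_simp
    simp only [Polynomial.eval_mul, Polynomial.eval_C]
    ring
  have lhs_eq : (∫ x in a..b, ((derivative^[l] p).eval x) ^ 2)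
      = δ * (A / (δ ^ l) ^ 2) := by
    rw [subst_integral hab, ← hδ, ← hφ]
    congr 1
    simp_rw [comp_eq]
    rw [intervalIntegral.integral_div, hA]
  have rhs_eq : (∫ x in a..b, (p.eval x) ^ 2) = δ * B := by
    rw [subst_integral hab, ← hδ, ← hφ, ← hq, ← hB]
  rw [lhs_eq, rhs_eq]
  have hδl : (0:ℝ) < δ ^ l := pow_pos hδpos l
  have s1 : Real.sqrt (δ * (A / (δ ^ l) ^ 2)) = Real.sqrt δ * (Real.sqrt A / δ ^ l) := by
    rw [Real.sqrt_mul hδpos.le, Real.sqrt_div hA0, Real.sqrt_sq hδl.le]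
  rw [s1]
  calc Real.sqrt δ * (Real.sqrt A / δ ^ l)
      ≤ Real.sqrt δ * ((CC ^ l * Real.sqrt B) / δ ^ l) := by
        apply mul_le_mul_of_nonneg_left _ (Real.sqrt_nonneg _)
        exact (div_le_div_iff_of_pos_right hδl).mpr hAB
    _ = CC ^ l / δ ^ l * (Real.sqrt δ * Real.sqrt B) := by ring
    _ = CC ^ l / δ ^ l * Real.sqrt (δ * B) := by rw [Real.sqrt_mul hδpos.le]


end QmTraceAux

open QmTraceAux Polynomial

/-- For `w ∈ Q^m([0,h] × Γ̂)` with `|Γ̂| ≃ h`, the bound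
`‖∂_η^k ∂_ξ^l w‖_{L²} ≤ C Σ_{j=k}^m h^{j-k-l+1/2} ‖∂_η^j w(0,·)‖_{L²(Γ̂)}` holds with `C`
independent of `h` and `w`. -/
theorem qm_polynomial_trace_bound
    (m : ℕ) (c₁ c₂ : ℝ) (hc₁ : 0 < c₁) (hc₁₂ : c₁ ≤ c₂) :
    ∃ C : ℝ, 0 < C ∧
      ∀ h a b : ℝ, 0 < h → c₁ * h ≤ b - a → b - a ≤ c₂ * h →
      ∀ (c : Fin (m + 1) → Fin (m + 1) → ℝ) (k l : ℕ), k ≤ m →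
        Real.sqrt (∫ η in (0 : ℝ)..h, ∫ ξ in a..b,
            (iteratedDeriv k
              (fun t => iteratedDeriv l (fun s => QEval m c t s) ξ) η) ^ 2) ≤
          C * ∑ j ∈ Finset.Icc k m,
                h ^ ((j : ℝ) - (k : ℝ) - (l : ℝ) + 1 / 2) *
                  Real.sqrt (∫ ξ in a..b,
                    (iteratedDeriv j (fun t => QEval m c t ξ) 0) ^ 2) := by
  obtain ⟨CC, hCC1, hinv⟩ := exists_inv m
  have hCC0 : (0:ℝ) < CC := lt_of_lt_of_le one_pos hCC1
  set Mx : ℝ := max 1 c₁⁻¹ with hMx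
  have hMx1 : (1:ℝ) ≤ Mx := le_max_left _ _
  set Kc : ℝ := CC ^ m * Mx ^ m with hKc
  have hCCm : (1:ℝ) ≤ CC ^ m := one_le_pow₀ hCC1
  have hMxm : (1:ℝ) ≤ Mx ^ m := one_le_pow₀ hMx1
  have hKc1 : (1:ℝ) ≤ Kc := by nlinarith
  set Cf : ℝ := ((m+1 : ℕ) : ℝ) ^ (m+1) * Kc with hCf
  have hm1 : (1:ℝ) ≤ ((m+1 : ℕ) : ℝ) ^ (m+1) :=
    one_le_pow₀ (by exact_mod_cast Nat.one_le_iff_ne_zero.mpr (by omega))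
  have hCf1 : (1:ℝ) ≤ Cf := by nlinarith
  have hCf0 : (0:ℝ) < Cf := lt_of_lt_of_le one_pos hCf1
  refine ⟨Cf, hCf0, ?_⟩
  intro h a b hh hba1 hba2 c k l hk
  have hab : a < b := by nlinarith [mul_pos hc₁ hh]
  have hδpos : 0 < b - a := by linarith
  set R : Fin (m+1) → ℝ[X] := fun i => Pc m (c i) with hR
  set f : Fin (m+1) → ℝ → ℝ :=
    fun i η => ((i : ℕ).descFactorial k : ℝ) * η ^ ((i : ℕ) - k) with hf
  set g : Fin (m+1) → ℝ → ℝ := fun i ξ => (derivative^[l] (R i)).eval ξ with hg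
  -- inner iterated derivative
  have stepA : ∀ ξ t : ℝ, iteratedDeriv l (fun s => QEval m c t s) ξ
      = ∑ i : Fin (m+1), t ^ (i : ℕ) * g i ξ := by
    intro ξ t
    have e0 : (fun s => QEval m c t s)
        = fun s => (Pc m (fun j => ∑ i : Fin (m+1), c i j * t ^ (i:ℕ))).eval s := by
      funext s
      rw [eval_Pc, QEval]
      rw [Finset.sum_comm]
      refine Finset.sum_congr rfl fun j _ => ?_
      rw [Finset.sum_mul]
    rw [e0, iteratedDeriv_eval]
    simp only []
    have e1 : Pc m (fun j => ∑ i : Fin (m+1), c i j * t ^ (i:ℕ))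
        = ∑ i : Fin (m+1), Polynomial.C (t ^ (i:ℕ)) * R i := by
      rw [Pc]
      have e2 : ∀ j : Fin (m+1),
          Polynomial.C (∑ i : Fin (m+1), c i j * t ^ (i:ℕ)) * Polynomial.X ^ (j:ℕ)
            = ∑ i : Fin (m+1), Polynomial.C (c i j * t ^ (i:ℕ)) * Polynomial.X ^ (j:ℕ) := by
        intro j
        rw [map_sum, Finset.sum_mul]
      simp_rw [e2]
      rw [Finset.sum_comm]
      refine Finset.sum_congr rfl fun i _ => ?_
      simp only [hR]
      rw [Pc, Finset.mul_sum]
      refine Finset.sum_congr rfl fun j _ => ?_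
      rw [Polynomial.C_mul]
      ring
    rw [e1, Polynomial.iterate_derivative_sum, Polynomial.eval_finset_sum]
    refine Finset.sum_congr rfl fun i _ => ?_
    rw [Polynomial.iterate_derivative_C_mul, Polynomial.eval_C_mul]
  -- full integrand
  have key1 : ∀ η ξ : ℝ,
      iteratedDeriv k (fun t => iteratedDeriv l (fun s => QEval m c t s) ξ) η
        = ∑ i : Fin (m+1), f i η * g i ξ := by
    intro η ξ
    have e0 : (fun t => iteratedDeriv l (fun s => QEval m c t s) ξ)
        = fun t => (Pc m (fun i => g i ξ)).eval t := by
      funext t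
      rw [stepA ξ t, eval_Pc]
      refine Finset.sum_congr rfl fun i _ => by ring
    rw [e0, iteratedDeriv_eval]
    simp only []
    rw [eval_iterate_derivative_Pc]
    refine Finset.sum_congr rfl fun i _ => ?_
    simp only [hf]
    ring
  -- RHS identification
  have key2 : ∀ j : ℕ, ∀ hj : j < m + 1, ∀ ξ : ℝ,
      iteratedDeriv j (fun t => QEval m c t ξ) 0
        = (j.factorial : ℝ) * (R ⟨j, hj⟩).eval ξ := by
    intro j hj ξ
    have e0 : (fun t => QEval m c t ξ)
        = fun t => (Pc m (fun i => (R i).eval ξ)).eval t := by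
      funext t
      rw [eval_Pc, QEval]
      refine Finset.sum_congr rfl fun i _ => ?_
      simp only [hR]
      rw [eval_Pc, Finset.sum_mul]
      refine Finset.sum_congr rfl fun jj _ => by ring
    rw [e0, iteratedDeriv_eval]
    simp only []
    rw [eval_iterate_derivative_Pc]
    rw [Finset.sum_eq_single (⟨j, hj⟩ : Fin (m+1))]
    · simp [Nat.descFactorial_self, mul_comm]
    · intro i _ hij
      have hij' : (i : ℕ) ≠ j := fun hcon => hij (Fin.ext hcon)
      rcases lt_or_gt_of_ne hij' with hlt | hgt
      · rw [Nat.descFactorial_eq_zero_iff_lt.mpr hlt]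
        simp
      · rw [zero_pow (by omega : (i:ℕ) - j ≠ 0)]
        simp
    · intro hcon
      exact absurd (Finset.mem_univ _) hcon
  -- rewrite LHS
  have LHSeq : (∫ η in (0:ℝ)..h, ∫ ξ in a..b,
        (iteratedDeriv k (fun t => iteratedDeriv l (fun s => QEval m c t s) ξ) η) ^ 2)
      = ∫ η in (0:ℝ)..h, ∫ ξ in a..b, (∑ i : Fin (m+1), f i η * g i ξ) ^ 2 := by
    apply intervalIntegral.integral_congr
    intro η _
    apply intervalIntegral.integral_congr
    intro ξ _
    simp only []
    rw [key1]
  have hcontf : ∀ i, Continuous (f i) := fun i => continuous_const.mul (continuous_pow _)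
  have hcontg : ∀ i, Continuous (g i) := fun i => Polynomial.continuous _
  -- nonnegativity of the RHS sum
  have hRHSnn : 0 ≤ ∑ j ∈ Finset.Icc k m,
      h ^ ((j : ℝ) - (k : ℝ) - (l : ℝ) + 1 / 2) *
        Real.sqrt (∫ ξ in a..b, (iteratedDeriv j (fun t => QEval m c t ξ) 0) ^ 2) := by
    apply Finset.sum_nonneg
    intro j _
    exact mul_nonneg (Real.rpow_nonneg hh.le _) (Real.sqrt_nonneg _)
  -- case l > m : LHS is zero
  by_cases hlm : m < l
  · have hzero : ∀ i : Fin (m+1), derivative^[l] (R i) = 0 := by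
      intro i
      apply Polynomial.iterate_derivative_eq_zero
      exact lt_of_le_of_lt (natDegree_Pc_le m (c i)) hlm
    have : (∫ η in (0:ℝ)..h, ∫ ξ in a..b,
        (iteratedDeriv k (fun t => iteratedDeriv l (fun s => QEval m c t s) ξ) η) ^ 2) = 0 := by
      rw [LHSeq]
      have : ∀ η ξ : ℝ, (∑ i : Fin (m+1), f i η * g i ξ) ^ 2 = 0 := by
        intro η ξ
        have : ∀ i : Fin (m+1), f i η * g i ξ = 0 := by
          intro i
          simp only [hg, hzero i]
          simp
        simp [this]
      simp only [this]
      simp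
    rw [this, Real.sqrt_zero]
    exact mul_nonneg hCf0.le hRHSnn
  push_neg at hlm
  -- main estimate
  have main := double_product_bound (le_of_lt hh) hab.le f g hcontf hcontg
  rw [LHSeq]
  refine le_trans main ?_
  -- bound each factor
  set W : Fin (m+1) → ℝ := fun i => Real.sqrt (∫ ξ in a..b, ((R i).eval ξ) ^ 2) with hW
  set T : Fin (m+1) → ℝ := fun i =>
    (((i:ℕ).descFactorial k : ℝ) * h ^ ((i:ℕ) - k) * Real.sqrt h) *
      (CC ^ l / (c₁ * h) ^ l * W i) with hT
  have hFbound : ∀ i : Fin (m+1),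
      Real.sqrt (∫ η in (0:ℝ)..h, (f i η) ^ 2)
        ≤ ((i:ℕ).descFactorial k : ℝ) * h ^ ((i:ℕ) - k) * Real.sqrt h := by
    intro i
    set d : ℝ := ((i:ℕ).descFactorial k : ℝ) with hd
    have hd0 : 0 ≤ d := Nat.cast_nonneg _
    set n : ℕ := (i:ℕ) - k with hn
    have hint : (∫ η in (0:ℝ)..h, (f i η) ^ 2) ≤ (d * h ^ n * Real.sqrt h) ^ 2 := by
      have e1 : ∀ η : ℝ, (f i η) ^ 2 = d ^ 2 * η ^ (2 * n) := by
        intro η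
        simp only [hf, ← hd, ← hn]
        rw [mul_pow, ← pow_mul]
        ring_nf
      simp_rw [e1]
      rw [intervalIntegral.integral_const_mul, integral_pow]
      have hle : (h ^ (2*n+1) - 0 ^ (2*n+1)) / ((2*n : ℕ) + 1 : ℝ)
          ≤ h ^ (2*n+1) := by
        rw [zero_pow (by omega), sub_zero]
        apply div_le_self (pow_nonneg hh.le _)
        have h2n := Nat.cast_nonneg (α := ℝ) (2*n)
        linarith
      calc d ^ 2 * ((h ^ (2*n+1) - 0 ^ (2*n+1)) / ((2*n : ℕ) + 1 : ℝ))
          ≤ d ^ 2 * h ^ (2*n+1) := mul_le_mul_of_nonneg_left hle (by positivity)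
        _ = (d * h ^ n * Real.sqrt h) ^ 2 := by
            rw [mul_pow, mul_pow, Real.sq_sqrt hh.le, ← pow_mul]
            ring
    calc Real.sqrt (∫ η in (0:ℝ)..h, (f i η) ^ 2)
        ≤ Real.sqrt ((d * h ^ n * Real.sqrt h) ^ 2) := Real.sqrt_le_sqrt hint
      _ = d * h ^ n * Real.sqrt h := Real.sqrt_sq (by positivity)
  have hGbound : ∀ i : Fin (m+1),
      Real.sqrt (∫ ξ in a..b, (g i ξ) ^ 2) ≤ CC ^ l / (c₁ * h) ^ l * W i := by
    intro i
    have h1 : Real.sqrt (∫ ξ in a..b, (g i ξ) ^ 2)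
        ≤ CC ^ l / (b - a) ^ l * W i := by
      simp only [hg, hW]
      exact inv_on_interval m hCC1 hinv hab l (R i) (natDegree_Pc_le m (c i))
    refine le_trans h1 ?_
    apply mul_le_mul_of_nonneg_right _ (Real.sqrt_nonneg _)
    apply div_le_div_of_nonneg_left (pow_nonneg hCC0.le _) (by positivity)
    exact pow_le_pow_left₀ (by positivity) hba1 l
  have hsum1 : (∑ i : Fin (m+1),
        Real.sqrt (∫ η in (0:ℝ)..h, (f i η) ^ 2) *
          Real.sqrt (∫ ξ in a..b, (g i ξ) ^ 2))
      ≤ ∑ i : Fin (m+1), T i := by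
    apply Finset.sum_le_sum
    intro i _
    exact mul_le_mul (hFbound i) (hGbound i) (Real.sqrt_nonneg _)
      (by positivity)
  refine le_trans hsum1 ?_
  -- reindex over Icc k m
  set U : ℕ → ℝ := fun j => if hj : j < m + 1 then T ⟨j, hj⟩ else 0 with hU
  have hreindex : (∑ i : Fin (m+1), T i) = ∑ j ∈ Finset.range (m+1), U j := by
    rw [← Fin.sum_univ_eq_sum_range U (m+1)]
    refine Finset.sum_congr rfl fun i _ => ?_
    simp only [hU]
    rw [dif_pos i.isLt]
  have hsubset : (∑ j ∈ Finset.range (m+1), U j) = ∑ j ∈ Finset.Icc k m, U j := by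
    symm
    apply Finset.sum_subset
    · intro j hj
      simp only [Finset.mem_Icc] at hj
      exact Finset.mem_range.mpr (by omega)
    · intro j hjr hjn
      simp only [Finset.mem_range] at hjr
      simp only [Finset.mem_Icc] at hjn
      have hjk : j < k := by omega
      simp only [hU]
      rw [dif_pos hjr]
      simp only [hT]
      rw [Nat.descFactorial_eq_zero_iff_lt.mpr hjk]
      simp
  rw [hreindex, hsubset, Finset.mul_sum]
  apply Finset.sum_le_sum
  intro j hj
  simp only [Finset.mem_Icc] at hj
  have hjm : j < m + 1 := by omega
  have hjk : k ≤ j := hj.1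
  -- identify RHS term
  have hRHSj : Real.sqrt (∫ ξ in a..b, (iteratedDeriv j (fun t => QEval m c t ξ) 0) ^ 2)
      = (j.factorial : ℝ) * W ⟨j, hjm⟩ := by
    have e1 : ∀ ξ : ℝ, (iteratedDeriv j (fun t => QEval m c t ξ) 0) ^ 2
        = (j.factorial : ℝ) ^ 2 * ((R ⟨j, hjm⟩).eval ξ) ^ 2 := by
      intro ξ
      rw [key2 j hjm ξ]
      ring
    simp_rw [e1]
    rw [intervalIntegral.integral_const_mul, Real.sqrt_mul (sq_nonneg _),
      Real.sqrt_sq (Nat.cast_nonneg _)]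
  rw [hRHSj]
  simp only [hU]
  rw [dif_pos hjm]
  simp only [hT]
  -- final coefficient comparison
  set W0 : ℝ := W ⟨j, hjm⟩ with hW0
  have hW0nn : 0 ≤ W0 := Real.sqrt_nonneg _
  have hexp : h ^ (j - k) * Real.sqrt h / h ^ l
      = h ^ ((j : ℝ) - (k : ℝ) - (l : ℝ) + 1 / 2) := by
    rw [Real.sqrt_eq_rpow]
    rw [← Real.rpow_natCast h (j - k), ← Real.rpow_natCast h l]
    rw [← Real.rpow_add hh, ← Real.rpow_sub hh]
    congr 1
    rw [Nat.cast_sub hjk]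
    push_cast
    ring
  have hfact1 : (1:ℝ) ≤ (j.factorial : ℝ) := by
    exact_mod_cast Nat.one_le_iff_ne_zero.mpr (Nat.factorial_ne_zero j)
  have hd : ((j.descFactorial k : ℕ) : ℝ) ≤ ((m+1 : ℕ) : ℝ) ^ (m+1) := by
    have h1 : j.descFactorial k ≤ (m+1)^(m+1) :=
      le_trans (Nat.descFactorial_le_pow j k)
        (le_trans (Nat.pow_le_pow_left (by omega) k)
          (Nat.pow_le_pow_right (by omega) (by omega)))
    exact_mod_cast h1
  have hCl : CC ^ l ≤ CC ^ m := pow_le_pow_right₀ hCC1 hlm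
  have hinvc : (c₁⁻¹) ^ l ≤ Mx ^ m :=
    le_trans (pow_le_pow_left₀ (by positivity) (le_max_right 1 c₁⁻¹) l)
      (pow_le_pow_right₀ hMx1 hlm)
  have hcoef : ((j.descFactorial k : ℕ) : ℝ) * CC ^ l / c₁ ^ l ≤ Cf * (j.factorial : ℝ) := by
    have e : ((j.descFactorial k : ℕ) : ℝ) * CC ^ l / c₁ ^ l
        = ((j.descFactorial k : ℕ) : ℝ) * CC ^ l * (c₁⁻¹) ^ l := by
      rw [inv_pow]
      rw [div_eq_mul_inv]
    have step : ((j.descFactorial k : ℕ) : ℝ) * CC ^ l * (c₁⁻¹) ^ l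
        ≤ ((m+1 : ℕ) : ℝ) ^ (m+1) * CC ^ m * Mx ^ m := by
      apply mul_le_mul (mul_le_mul hd hCl (by positivity) (by positivity)) hinvc
        (by positivity) (by positivity)
    have step2 : ((m+1 : ℕ) : ℝ) ^ (m+1) * CC ^ m * Mx ^ m = Cf := by
      rw [hCf, hKc]; ring
    calc ((j.descFactorial k : ℕ) : ℝ) * CC ^ l / c₁ ^ l
        = ((j.descFactorial k : ℕ) : ℝ) * CC ^ l * (c₁⁻¹) ^ l := e
      _ ≤ Cf := by rw [← step2]; exact step
      _ ≤ Cf * (j.factorial : ℝ) := le_mul_of_one_le_right hCf0.le hfact1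
  have key3 : (((j.descFactorial k : ℕ) : ℝ) * h ^ (j - k) * Real.sqrt h) *
        (CC ^ l / (c₁ * h) ^ l * W0)
      = (((j.descFactorial k : ℕ) : ℝ) * CC ^ l / c₁ ^ l) *
          (h ^ (j - k) * Real.sqrt h / h ^ l) * W0 := by
    rw [mul_pow c₁ h l]
    have hc1l : c₁ ^ l ≠ 0 := by positivity
    have hhl : h ^ l ≠ 0 := by positivity
    field_simp
  rw [key3, hexp]
  calc (((j.descFactorial k : ℕ) : ℝ) * CC ^ l / c₁ ^ l) *
        h ^ ((j : ℝ) - (k : ℝ) - (l : ℝ) + 1 / 2) * W0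
      ≤ (Cf * (j.factorial : ℝ)) * h ^ ((j : ℝ) - (k : ℝ) - (l : ℝ) + 1 / 2) * W0 := by
        apply mul_le_mul_of_nonneg_right _ hW0nn
        exact mul_le_mul_of_nonneg_right hcoef (Real.rpow_nonneg hh.le _)
    _ = Cf * (h ^ ((j : ℝ) - (k : ℝ) - (l : ℝ) + 1 / 2) * ((j.factorial : ℝ) * W0)) := by
        ring

end
end
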